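/- arXiv:2108.02036 — 5 statements merged into one kernel-verified Lean document; each statement's English description precedes it below -/
import Mathlib

section
/- Let z_1, ..., z_m ∈ ℂ be distinct points with multiplicities n_1, ..., n_m ∈ ℕ. Let u, v, f be complex functions analytic on a neighborhood of each z_k, with v(z_k) ≠ 0 for k = 1, ..., m. Then the interpolation conditions (u/v)^{(j)}(z_k) = f^{(j)}(z_k) for all k = 1, ..., m and j = 0, 1, ..., n_k − 1 hold if and only if the conditions u^{(j)}(z_k) = (v·f)^{(j)}(z_k) for all k = 1, ..., m and j = 0, 1, ..., n_k − 1 hold. -/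
open Topology Filter

private lemma analyticAt_deriv' {f : ℂ → ℂ} {x : ℂ} (hf : AnalyticAt ℂ f x) :
    AnalyticAt ℂ (deriv f) x := by
  have h : AnalyticOnNhd ℂ f {x} := fun y hy => by
    rw [Set.mem_singleton_iff.mp hy]; exact hf
  exact h.deriv x rfl

private lemma iteratedDeriv_add_analytic {f g : ℂ → ℂ} {x : ℂ}
    (hf : AnalyticAt ℂ f x) (hg : AnalyticAt ℂ g x) (n : ℕ) :
    iteratedDeriv n (fun y => f y + g y) x = iteratedDeriv n f x + iteratedDeriv n g x := by
  obtain ⟨s, hsub, hso, hxs⟩ :=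
    mem_nhds_iff.mp (hf.eventually_analyticAt.and hg.eventually_analyticAt)
  have hud : UniqueDiffOn ℂ s := hso.uniqueDiffOn
  have key : ∀ (h : ℂ → ℂ), iteratedDerivWithin n h s x = iteratedDeriv n h x := fun h => by
    rw [iteratedDerivWithin_eq_iteratedFDerivWithin, iteratedDeriv_eq_iteratedFDeriv,
      iteratedFDerivWithin_of_isOpen n hso hxs]
  have hfs : AnalyticOnNhd ℂ f s := fun y hy => (hsub hy).1
  have hgs : AnalyticOnNhd ℂ g s := fun y hy => (hsub hy).2
  have : (fun y => f y + g y) = f + g := rfl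
  rw [this, ← key (f + g), ← key f, ← key g,
    iteratedDerivWithin_add hxs hud (hfs.contDiffOn hud x hxs) (hgs.contDiffOn hud x hxs)]

private lemma iteratedDeriv_sub_analytic {f g : ℂ → ℂ} {x : ℂ}
    (hf : AnalyticAt ℂ f x) (hg : AnalyticAt ℂ g x) (n : ℕ) :
    iteratedDeriv n (fun y => f y - g y) x = iteratedDeriv n f x - iteratedDeriv n g x := by
  have h1 : (fun y => f y - g y) = fun y => f y + (-g) y := by
    funext y; simp [sub_eq_add_neg]
  rw [h1, iteratedDeriv_add_analytic hf hg.neg,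
    show iteratedDeriv n (-g) x = -(iteratedDeriv n g x) from iteratedDeriv_neg n g x,
    sub_eq_add_neg]

private lemma vanish_mul : ∀ (n : ℕ) (w a : ℂ → ℂ) (x : ℂ), AnalyticAt ℂ w x → AnalyticAt ℂ a x →
    (∀ j < n, iteratedDeriv j a x = 0) → ∀ j < n, iteratedDeriv j (fun y => w y * a y) x = 0 := by
  intro n
  induction n with
  | zero => intro w a x _ _ _ j hj; omega
  | succ n ih =>
    intro w a x hw ha H j hj
    match j with
    | 0 =>
      have h0 := H 0 (by omega)
      simp only [iteratedDeriv_zero] at h0 ⊢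
      simp [h0]
    | (i + 1) =>
      have hi : i < n := by omega
      rw [iteratedDeriv_succ']
      have hev : (deriv fun y => w y * a y) =ᶠ[𝓝 x]
          (fun y => deriv w y * a y + w y * deriv a y) := by
        filter_upwards [hw.eventually_analyticAt, ha.eventually_analyticAt] with y hwy hay
        exact deriv_mul hwy.differentiableAt hay.differentiableAt
      rw [hev.iteratedDeriv_eq i]
      have hw' : AnalyticAt ℂ (deriv w) x := analyticAt_deriv' hw
      have ha' : AnalyticAt ℂ (deriv a) x := analyticAt_deriv' ha
      rw [iteratedDeriv_add_analytic (f := fun y => deriv w y * a y) (g := fun y => w y * deriv a y)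
          (hw'.mul ha) (hw.mul ha') i,
        ih (deriv w) a x hw' ha (fun j hj => H j (by omega)) i hi,
        ih w (deriv a) x hw ha'
          (fun j hj => by rw [← iteratedDeriv_succ']; exact H (j + 1) (by omega)) i hi,
        add_zero]

private lemma zero_iff_mul (v h : ℂ → ℂ) (x : ℂ) (hv : AnalyticAt ℂ v x) (hh : AnalyticAt ℂ h x)
    (hvx : v x ≠ 0) (n : ℕ) :
    (∀ j < n, iteratedDeriv j h x = 0) ↔
      (∀ j < n, iteratedDeriv j (fun y => v y * h y) x = 0) := by
  constructor
  · exact vanish_mul n v h x hv hh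
  · intro H j hj
    have hinv : AnalyticAt ℂ (fun y => (v y)⁻¹) x := hv.inv hvx
    have hev : h =ᶠ[𝓝 x] fun y => (v y)⁻¹ * (v y * h y) := by
      filter_upwards [hv.continuousAt.eventually_ne hvx] with y hy
      rw [inv_mul_cancel_left₀ hy]
    rw [hev.iteratedDeriv_eq j]
    exact vanish_mul n _ _ x hinv (hv.mul hh) H j hj

/- STATEMENT 0: equivalence of the two systems of interpolation conditions
   (u/v)^{(j)}(z_k) = f^{(j)}(z_k)  ⟺  u^{(j)}(z_k) = (v·f)^{(j)}(z_k). -/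
theorem rational_interpolation_conditions_equiv
    {m : ℕ} (z : Fin m → ℂ) (hz : Function.Injective z) (nn : Fin m → ℕ)
    (u v f : ℂ → ℂ)
    (hu : ∀ k, AnalyticAt ℂ u (z k)) (hv : ∀ k, AnalyticAt ℂ v (z k))
    (hf : ∀ k, AnalyticAt ℂ f (z k)) (hvz : ∀ k, v (z k) ≠ 0) :
    (∀ k, ∀ j < nn k,
        iteratedDeriv j (fun w => u w / v w) (z k) = iteratedDeriv j f (z k))
      ↔
    (∀ k, ∀ j < nn k,
        iteratedDeriv j u (z k) = iteratedDeriv j (fun w => v w * f w) (z k)) := by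
  refine forall_congr' fun k => ?_
  set x := z k with hx
  set n := nn k with hn
  set g : ℂ → ℂ := fun w => u w / v w with hgdef
  have hg : AnalyticAt ℂ g x := (hu k).div (hv k) (hvz k)
  have hueq : u =ᶠ[𝓝 x] fun y => v y * g y := by
    filter_upwards [(hv k).continuousAt.eventually_ne (hvz k)] with y hy
    rw [hgdef]
    field_simp
  have step1 : (∀ j < n, iteratedDeriv j g x = iteratedDeriv j f x) ↔
      (∀ j < n, iteratedDeriv j (fun y => g y - f y) x = 0) := by
    refine forall₂_congr fun j hj => ?_
    rw [iteratedDeriv_sub_analytic hg (hf k) j, sub_eq_zero]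
  have step2 := zero_iff_mul v (fun y => g y - f y) x (hv k) (hg.sub (hf k)) (hvz k) n
  have step3 : (∀ j < n, iteratedDeriv j (fun y => v y * (g y - f y)) x = 0) ↔
      (∀ j < n, iteratedDeriv j u x = iteratedDeriv j (fun w => v w * f w) x) := by
    refine forall₂_congr fun j hj => ?_
    have heq : iteratedDeriv j (fun y => v y * (g y - f y)) x =
        iteratedDeriv j (fun y => v y * g y) x - iteratedDeriv j (fun y => v y * f y) x := by
      rw [show (fun y => v y * (g y - f y)) = fun y => v y * g y - v y * f y from
        funext fun y => by ring]
      exact iteratedDeriv_sub_analytic ((hv k).mul hg) ((hv k).mul (hf k)) j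
    rw [heq, sub_eq_zero, ← hueq.iteratedDeriv_eq j]
  exact step1.trans (step2.trans step3)
end

section
/- Let z_1, ..., z_N ∈ ℂ be points listed with repetitions, all lying in the open disc D(c, R), and let f be analytic on an open set containing the closed disc of center c and radius R. Let v be a polynomial with v(z_k) ≠ 0 for all k, and let u be a polynomial with deg u ≤ N − 1 such that r = u/v interpolates f at z_1, ..., z_N (counted according to multiplicities). Then for every z in D(c, R) with v(z) ≠ 0, f(z) − u(z)/v(z) = (Ω(z)/v(z)) · (2πi)^{−1} ∮_{|λ−c|=R} v(λ)f(λ)/(Ω(λ)(λ − z)) dλ. -/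
open Polynomial Metric Topology Filter

/- STATEMENT 2: Hermite-type contour-integral representation of the remainder of
   rational interpolation:
   f(z) − u(z)/v(z) = (Ω(z)/v(z)) (2πi)⁻¹ ∮_{|λ−c|=R} v(λ)f(λ)/(Ω(λ)(λ−z)) dλ. -/
lemma iD_coeff {f : ℂ → ℂ} {p : FormalMultilinearSeries ℂ ℂ ℂ} {x : ℂ}
    (h : HasFPowerSeriesAt f p x) (n : ℕ) :
    iteratedDeriv n f x = (Nat.factorial n : ℂ) * p.coeff n := by
  rcases h with ⟨r, hr⟩
  have h2 := hr.factorial_smul (1 : ℂ) n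
  rw [iteratedDeriv_eq_iteratedFDeriv, ← h2]
  have h3 : p n (fun _ => (1:ℂ)) = p.coeff n := rfl
  rw [h3, nsmul_eq_mul]

lemma peelAt {g : ℂ → ℂ} {b : ℂ} (hg : AnalyticAt ℂ g b) (m : ℕ)
    (hvan : ∀ j < m, iteratedDeriv j g b = 0) :
    ∃ G : ℂ → ℂ, AnalyticAt ℂ G b ∧ ∀ x, g x = (x - b) ^ m * G x := by
  obtain ⟨p, hp⟩ := hg
  have hcoeff : ∀ j < m, p.coeff j = 0 := by
    intro j hj
    have h1 := iD_coeff hp j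
    rw [hvan j hj] at h1
    have h2 : (Nat.factorial j : ℂ) ≠ 0 := by
      exact_mod_cast Nat.factorial_ne_zero j
    have h3 := mul_eq_zero.mp h1.symm
    rcases h3 with h3 | h3
    · exact absurd h3 h2
    · exact h3
  have key : ∀ j, j ≤ m → ∀ x, g x = (x - b) ^ j * ((Function.swap dslope b)^[j] g) x := by
    intro j
    induction j with
    | zero => simp
    | succ i ih =>
      intro hi x
      have hgi : HasFPowerSeriesAt ((Function.swap dslope b)^[i] g)
          (FormalMultilinearSeries.fslope^[i] p) b :=
        hp.has_fpower_series_iterate_dslope_fslope i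
      have hval : ((Function.swap dslope b)^[i] g) b = 0 := by
        have h0 := iD_coeff hgi 0
        rw [iteratedDeriv_zero] at h0
        rw [h0, FormalMultilinearSeries.coeff_iterate_fslope, zero_add,
          hcoeff i (by omega)]
        simp
      have hstep : ((Function.swap dslope b)^[i] g) x
          = (x - b) * ((Function.swap dslope b)^[i+1] g) x := by
        have h4 := sub_smul_dslope ((Function.swap dslope b)^[i] g) b x
        rw [hval, sub_zero, smul_eq_mul] at h4
        rw [Function.iterate_succ_apply']
        exact h4.symm
      rw [ih (by omega) x, hstep, pow_succ]
      ring
  exact ⟨(Function.swap dslope b)^[m] g,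
    ⟨_, hp.has_fpower_series_iterate_dslope_fslope m⟩, key m le_rfl⟩

lemma factor_vanish (b : ℂ) :
    ∀ (m : ℕ) (g G : ℂ → ℂ), AnalyticAt ℂ G b →
      (∀ᶠ x in 𝓝 b, g x = (x - b) ^ m * G x) → ∀ j < m, iteratedDeriv j g b = 0 := by
  intro m
  induction m with
  | zero => intro g G _ _ j hj; omega
  | succ m ih =>
    intro g G hG heq j hj
    cases j with
    | zero =>
      rw [iteratedDeriv_zero]
      have h0 := heq.self_of_nhds
      simp [h0]
    | succ i =>
      rw [iteratedDeriv_succ']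
      have hG' : ∀ᶠ x in 𝓝 b, AnalyticAt ℂ G x := hG.eventually_analyticAt
      have hGd : AnalyticAt ℂ (deriv G) b := by
        rw [_root_.eventually_nhds_iff] at hG'
        obtain ⟨t, ht, hto, hbt⟩ := hG'
        exact (AnalyticOnNhd.deriv (fun x hx => ht x hx)) b hbt
      have hder : ∀ᶠ x in 𝓝 b,
          deriv g x = (x - b) ^ m * (((m : ℂ) + 1) * G x + (x - b) * deriv G x) := by
        have heq' : g =ᶠ[𝓝 b] fun x => (x - b) ^ (m + 1) * G x := heq
        have h1 : deriv g =ᶠ[𝓝 b] deriv (fun x => (x - b) ^ (m + 1) * G x) :=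
          Filter.EventuallyEq.deriv heq'
        filter_upwards [h1, hG'] with x hx hGx
        rw [hx]
        have h3 : HasDerivAt (fun y : ℂ => (y - b) ^ (m + 1))
            (((m + 1 : ℕ) : ℂ) * (x - b) ^ m * 1) x := by
          simpa using ((hasDerivAt_id x).sub_const b).fun_pow (m + 1)
        have hd := h3.fun_mul hGx.differentiableAt.hasDerivAt
        rw [hd.deriv]
        push_cast
        ring
      exact ih (deriv g) _ ((analyticAt_const.mul hG).add
        ((analyticAt_id.sub analyticAt_const).mul hGd)) hder i (by omega)

lemma factor_multiset {U : Set ℂ} (S : Multiset ℂ) :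
    (∀ a ∈ S, a ∈ U) → ∀ g : ℂ → ℂ, AnalyticOnNhd ℂ g U →
    (∀ a ∈ S, ∀ j < S.count a, iteratedDeriv j g a = 0) →
    ∃ h : ℂ → ℂ, AnalyticOnNhd ℂ h U ∧
      ∀ x, g x = (S.map (fun r => x - r)).prod * h x := by
  induction S using Multiset.strongInductionOn with
  | ih S IH =>
    rcases Multiset.empty_or_exists_mem S with rfl | ⟨a, haS⟩
    · intro _ g hg _; exact ⟨g, hg, by simp⟩
    intro hSU g hg hvan
    have hm1 : 1 ≤ S.count a := Multiset.one_le_count_iff_mem.mpr haS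
    obtain ⟨G, hGa, hfac⟩ := peelAt (hg a (hSU a haS)) (S.count a)
      (fun j hj => hvan a haS j hj)
    have hGU : AnalyticOnNhd ℂ G U := by
      intro x hx
      rcases eq_or_ne x a with rfl | hxa
      · exact hGa
      · have h1 : AnalyticAt ℂ (fun y => g y / (y - a) ^ S.count a) x :=
          (hg x hx).div ((analyticAt_id.sub analyticAt_const).pow _)
            (pow_ne_zero _ (sub_ne_zero.mpr hxa))
        apply h1.congr
        have hne : ∀ᶠ y in 𝓝 x, y ≠ a := isOpen_ne.eventually_mem hxa
        filter_upwards [hne] with y hy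
        rw [hfac y, mul_comm, mul_div_assoc, div_self (pow_ne_zero _ (sub_ne_zero.mpr hy)),
          mul_one]
    set T := S.filter (· ≠ a) with hT
    have hTle : T ≤ S := Multiset.filter_le _ S
    have hTa : T.count a = 0 := by
      simp [hT, Multiset.count_filter]
    have hTS : T < S := lt_of_le_of_ne hTle (by
      intro h
      rw [h] at hTa
      omega)
    have hcnt : ∀ b ∈ T, T.count b = S.count b := by
      intro b hb
      have hba : b ≠ a := (Multiset.mem_filter.mp hb).2
      simp [hT, Multiset.count_filter, hba]
    have hvan' : ∀ b ∈ T, ∀ j < T.count b, iteratedDeriv j G b = 0 := by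
      intro b hbT j hj
      have hbS : b ∈ S := Multiset.mem_of_mem_filter hbT
      have hba : b ≠ a := (Multiset.mem_filter.mp hbT).2
      obtain ⟨G₂, hG₂, hfac₂⟩ := peelAt (hg b (hSU b hbS)) (S.count b)
        (fun j hj => hvan b hbS j hj)
      have hev : ∀ᶠ x in 𝓝 b, G x = (x - b) ^ S.count b
          * (G₂ x / (x - a) ^ S.count a) := by
        have hne : ∀ᶠ x in 𝓝 b, x ≠ a := isOpen_ne.eventually_mem hba
        filter_upwards [hne] with x hx
        have h1 := hfac x
        have h2 := hfac₂ x
        have hxa : ((x - a) ^ S.count a : ℂ) ≠ 0 := pow_ne_zero _ (sub_ne_zero.mpr hx)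
        field_simp
        rw [mul_comm, ← h1, h2]
      exact factor_vanish b (S.count b) G _
        (hG₂.div ((analyticAt_id.sub analyticAt_const).pow _)
          (pow_ne_zero _ (sub_ne_zero.mpr hba))) hev j (by rw [hcnt b hbT] at hj; exact hj)
    obtain ⟨h, hhU, hfacT⟩ := IH T hTS (fun b hb => hSU b (Multiset.mem_of_mem_filter hb))
      G hGU hvan'
    refine ⟨h, hhU, fun x => ?_⟩
    have hsplit : T + Multiset.replicate (S.count a) a = S := by
      rw [hT]
      conv_rhs => rw [← Multiset.filter_add_not (fun b => b ≠ a) S]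
      congr 1
      rw [Multiset.filter_congr (fun x _ => not_ne_iff)]
      exact (Multiset.filter_eq' S a).symm
    have hprod : ((S.map fun r => x - r).prod)
        = ((T.map fun r => x - r).prod) * (x - a) ^ S.count a := by
      conv_lhs => rw [← hsplit]
      simp only [Multiset.map_add, Multiset.prod_add, Multiset.map_replicate,
        Multiset.prod_replicate]
    rw [hfac x, hfacT x, hprod]
    ring

lemma msProd_continuous (S : Multiset ℂ) :
    Continuous fun x : ℂ => (S.map fun r => x - r).prod := by
  induction S using Multiset.induction_on with
  | empty => simpa using continuous_const
  | cons a T ih =>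
    simp only [Multiset.map_cons, Multiset.prod_cons]
    exact (continuous_id.sub continuous_const).mul ih

lemma sphere_ne_of_ball {c : ℂ} {R : ℝ} {a lam : ℂ} (ha : a ∈ ball c R)
    (hl : lam ∈ sphere c R) : lam ≠ a := by
  intro h
  rw [mem_ball] at ha
  rw [mem_sphere] at hl
  rw [← h] at ha
  rw [hl] at ha
  exact lt_irrefl _ ha

lemma msProd_ne_zero {c : ℂ} {R : ℝ} {S : Multiset ℂ} (hS : ∀ a ∈ S, a ∈ ball c R)
    {lam : ℂ} (hl : lam ∈ sphere c R) : (S.map fun r => lam - r).prod ≠ 0 := by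
  intro h
  rw [Multiset.prod_eq_zero_iff] at h
  obtain ⟨r, hr, hr0⟩ := Multiset.mem_map.mp h
  exact sphere_ne_of_ball (hS r hr) hl (sub_eq_zero.mp hr0)

lemma circleIntegrable_inv_prod {c : ℂ} {R : ℝ} (hR : 0 ≤ R) {S : Multiset ℂ}
    (hS : ∀ a ∈ S, a ∈ ball c R) :
    CircleIntegrable (fun lam => ((S.map fun r => lam - r).prod)⁻¹) c R :=
  (ContinuousOn.inv₀ (msProd_continuous S).continuousOn
    (fun lam hl => msProd_ne_zero hS hl)).circleIntegrable hR

lemma circleIntegrable_poly_div_prod {c : ℂ} {R : ℝ} (hR : 0 ≤ R) {S : Multiset ℂ}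
    (hS : ∀ a ∈ S, a ∈ ball c R) (q : Polynomial ℂ) :
    CircleIntegrable (fun lam => q.eval lam / (S.map fun r => lam - r).prod) c R := by
  apply ContinuousOn.circleIntegrable hR
  exact (q.continuous.continuousOn).div (msProd_continuous S).continuousOn
    (fun lam hl => msProd_ne_zero hS hl)

lemma claimD (c : ℂ) (R : ℝ) (S : Multiset ℂ) :
    (∀ a ∈ S, a ∈ ball c R) → 2 ≤ Multiset.card S →
    (∮ lam in C(c, R), ((S.map fun r => lam - r).prod)⁻¹) = 0 := by
  induction S using Multiset.strongInductionOn with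
  | ih S IH =>
    intro hball hcard
    obtain ⟨a, haS⟩ : ∃ a, a ∈ S := Multiset.card_pos_iff_exists_mem.mp (by omega)
    have hR : 0 < R := pos_of_mem_ball (hball a haS)
    by_cases hall : ∀ b ∈ S, b = a
    · have hrep : S = Multiset.replicate (Multiset.card S) a :=
        (Multiset.eq_replicate_card).mpr hall
      have heq : ∀ lam : ℂ,
          (((Multiset.replicate (Multiset.card S) a).map fun r => lam - r).prod)⁻¹
            = (lam - a) ^ (-(Multiset.card S : ℤ)) := by
        intro lam
        rw [Multiset.map_replicate, Multiset.prod_replicate, zpow_neg, zpow_natCast]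
      rw [hrep]
      simp only [heq]
      exact circleIntegral.integral_sub_zpow_of_ne (by omega) c a R
    · push_neg at hall
      obtain ⟨b, hbS, hba⟩ := hall
      obtain ⟨T, rfl⟩ : ∃ T, S = a ::ₘ b ::ₘ T := by
        have hbS' : b ∈ S.erase a := (Multiset.mem_erase_of_ne hba).mpr hbS
        refine ⟨(S.erase a).erase b, ?_⟩
        rw [Multiset.cons_erase hbS', Multiset.cons_erase haS]
      have hTball : ∀ r ∈ T, r ∈ ball c R := fun r hr =>
        hball r (by simp [hr])
      have haball : a ∈ ball c R := hball a haS
      have hbball : b ∈ ball c R := hball b hbS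
      have haT : ∀ r ∈ (a ::ₘ T), r ∈ ball c R := by
        intro r hr
        rcases Multiset.mem_cons.mp hr with rfl | hr
        exacts [haball, hTball r hr]
      have hbT : ∀ r ∈ (b ::ₘ T), r ∈ ball c R := by
        intro r hr
        rcases Multiset.mem_cons.mp hr with rfl | hr
        exacts [hbball, hTball r hr]
      have key : Set.EqOn
          (fun lam => (((a ::ₘ b ::ₘ T).map fun r => lam - r).prod)⁻¹)
          (fun lam => (a - b)⁻¹ *
            ((((a ::ₘ T).map fun r => lam - r).prod)⁻¹
              - (((b ::ₘ T).map fun r => lam - r).prod)⁻¹))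
          (sphere c R) := by
        intro lam hl
        have hla : lam - a ≠ 0 := sub_ne_zero.mpr (sphere_ne_of_ball haball hl)
        have hlb : lam - b ≠ 0 := sub_ne_zero.mpr (sphere_ne_of_ball hbball hl)
        have hab : a - b ≠ 0 := sub_ne_zero.mpr hba.symm
        simp only [Multiset.map_cons, Multiset.prod_cons]
        by_cases hP : (T.map fun r => lam - r).prod = 0
        · simp [hP]
        · field_simp
          ring
      rw [circleIntegral.integral_congr hR.le key]
      rw [circleIntegral.integral_const_mul]
      rw [circleIntegral.integral_sub (circleIntegrable_inv_prod hR.le haT)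
        (circleIntegrable_inv_prod hR.le hbT)]
      rcases Nat.eq_zero_or_pos (Multiset.card T) with hT0 | hT1
      · have : T = 0 := Multiset.card_eq_zero.mp hT0
        subst this
        simp only [Multiset.map_cons, Multiset.prod_cons, Multiset.map_zero,
          Multiset.prod_zero, mul_one]
        rw [circleIntegral.integral_sub_inv_of_mem_ball haball,
          circleIntegral.integral_sub_inv_of_mem_ball hbball]
        simp
      · have h1 : (a ::ₘ T) < a ::ₘ b ::ₘ T :=
          Multiset.cons_lt_cons a (Multiset.lt_cons_self T b)
        have h2 : (b ::ₘ T) < a ::ₘ b ::ₘ T := Multiset.lt_cons_self _ a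
        rw [IH _ h1 haT (by simp; omega), IH _ h2 hbT (by simp; omega)]
        simp

lemma wb_le_of_lt_succ {d : WithBot ℕ} {n : ℕ} (h : d < ((n + 1 : ℕ) : WithBot ℕ)) :
    d ≤ (n : WithBot ℕ) := by
  cases d with
  | bot => exact bot_le
  | coe m =>
    rw [Nat.cast_withBot] at h
    rw [Nat.cast_withBot]
    exact WithBot.coe_le_coe.mpr (Nat.lt_succ_iff.mp (WithBot.coe_lt_coe.mp h))

lemma circleIntegral_add {f g : ℂ → ℂ} {c : ℂ} {R : ℝ} (hf : CircleIntegrable f c R)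
    (hg : CircleIntegrable g c R) :
    (∮ z in C(c, R), (f z + g z)) = (∮ z in C(c, R), f z) + ∮ z in C(c, R), g z := by
  simp only [circleIntegral, smul_add, intervalIntegral.integral_add hf.out hg.out]

lemma claimC (c : ℂ) (R : ℝ) (S : Multiset ℂ) :
    (∀ a ∈ S, a ∈ ball c R) → ∀ q : Polynomial ℂ,
    q.degree < ((Multiset.card S : ℕ) : WithBot ℕ) →
    (∮ lam in C(c, R), q.eval lam / (S.map fun r => lam - r).prod)
      = (2 * Real.pi * Complex.I) * q.coeff (Multiset.card S - 1) := by
  induction S using Multiset.strongInductionOn with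
  | ih S IH =>
    intro hball q hdeg
    rcases Multiset.empty_or_exists_mem S with rfl | ⟨a, haS⟩
    · have hq0 : q = 0 := by
        by_contra hq
        have := Polynomial.zero_le_degree_iff.mpr hq
        simp only [Multiset.card_zero, Nat.cast_zero] at hdeg
        exact absurd (lt_of_le_of_lt this hdeg) (lt_irrefl 0)
      subst hq0
      simp only [Polynomial.eval_zero, zero_div, Polynomial.coeff_zero, mul_zero]
      simp [circleIntegral]
    have hR : 0 < R := pos_of_mem_ball (hball a haS)
    obtain ⟨T, rfl⟩ : ∃ T, S = a ::ₘ T := ⟨S.erase a, (Multiset.cons_erase haS).symm⟩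
    have haball : a ∈ ball c R := hball a haS
    have hTball : ∀ r ∈ T, r ∈ ball c R := fun r hr => hball r (by simp [hr])
    rcases Nat.eq_zero_or_pos (Multiset.card T) with hT0 | hT1
    · -- single point
      have hT : T = 0 := Multiset.card_eq_zero.mp hT0
      subst hT
      simp only [Multiset.card_cons, Multiset.card_zero, zero_add] at hdeg ⊢
      have hq : q = C (q.coeff 0) := Polynomial.eq_C_of_degree_le_zero (wb_le_of_lt_succ hdeg)
      have key : Set.EqOn (fun lam => q.eval lam / ((a ::ₘ 0).map fun r => lam - r).prod)
          (fun lam => q.coeff 0 * (lam - a)⁻¹) (sphere c R) := by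
        intro lam _
        simp only [Multiset.map_cons, Multiset.prod_cons, Multiset.map_zero,
          Multiset.prod_zero, mul_one]
        rw [div_eq_mul_inv]
        congr 1
        conv_lhs => rw [hq]
        simp
      rw [circleIntegral.integral_congr hR.le key, circleIntegral.integral_const_mul,
        circleIntegral.integral_sub_inv_of_mem_ball haball]
      ring_nf
    · -- card T ≥ 1
      by_cases hq0 : q = 0
      · subst hq0
        simp only [Polynomial.eval_zero, zero_div, Polynomial.coeff_zero, mul_zero]
        simp [circleIntegral]
      set q₁ := q /ₘ (X - C a) with hq₁
      have hmon : Monic (X - C a) := monic_X_sub_C a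
      have hqeq : q = C (q.eval a) + (X - C a) * q₁ := by
        conv_lhs => rw [← Polynomial.modByMonic_add_div q (X - C a)]
        rw [Polynomial.modByMonic_X_sub_C_eq_C_eval]
      have hdegS : q.degree ≤ ((Multiset.card T : ℕ) : WithBot ℕ) := by
        apply wb_le_of_lt_succ
        simpa [Multiset.card_cons] using hdeg
      have hdeg₁ : q₁.degree < ((Multiset.card T : ℕ) : WithBot ℕ) :=
        lt_of_lt_of_le (Polynomial.degree_divByMonic_lt q (X - C a) hq0
          (by rw [Polynomial.degree_X_sub_C]; norm_num)) hdegS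
      have hcoeff : q.coeff (Multiset.card (a ::ₘ T) - 1) = q₁.coeff (Multiset.card T - 1) := by
        obtain ⟨n, hn⟩ : ∃ n, Multiset.card T = n + 1 := ⟨Multiset.card T - 1, by omega⟩
        rw [Multiset.card_cons, hn]
        simp only [Nat.add_sub_cancel]
        conv_lhs => rw [hqeq]
        rw [Polynomial.coeff_add, Polynomial.coeff_C, if_neg (by omega), sub_mul,
          Polynomial.coeff_sub, Polynomial.coeff_X_mul, Polynomial.coeff_C_mul,
          Polynomial.coeff_eq_zero_of_degree_lt (n := n + 1)
            (by rw [hn] at hdeg₁; exact_mod_cast hdeg₁)]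
        ring
      have key : Set.EqOn (fun lam => q.eval lam / ((a ::ₘ T).map fun r => lam - r).prod)
          (fun lam => q₁.eval lam / (T.map fun r => lam - r).prod
            + q.eval a * (((a ::ₘ T).map fun r => lam - r).prod)⁻¹) (sphere c R) := by
        intro lam hl
        have hla : lam - a ≠ 0 := sub_ne_zero.mpr (sphere_ne_of_ball haball hl)
        have hP : (T.map fun r => lam - r).prod ≠ 0 := msProd_ne_zero hTball hl
        have heval : q.eval lam = q.eval a + (lam - a) * q₁.eval lam := by
          conv_lhs => rw [hqeq]
          simp [Polynomial.eval_add, Polynomial.eval_mul, Polynomial.eval_sub]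
        simp only [Multiset.map_cons, Multiset.prod_cons]
        rw [heval]
        field_simp
        ring
      have hint2 : CircleIntegrable
          (fun lam => q.eval a * (((a ::ₘ T).map fun r => lam - r).prod)⁻¹) c R := by
        apply ContinuousOn.circleIntegrable hR.le
        exact continuousOn_const.mul (ContinuousOn.inv₀
          (msProd_continuous _).continuousOn
          (fun lam hl => msProd_ne_zero (fun r hr => hball r hr) hl))
      rw [circleIntegral.integral_congr hR.le key,
        circleIntegral_add (circleIntegrable_poly_div_prod hR.le hTball q₁) hint2,
        circleIntegral.integral_const_mul,
        IH T (Multiset.lt_cons_self T a) hTball q₁ hdeg₁,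
        claimD c R (a ::ₘ T) (fun r hr => hball r hr) (by simp; omega), hcoeff]
      ring

theorem rational_interpolation_remainder_circleIntegral
    {N : ℕ} (c : ℂ) (R : ℝ) (z : Fin N → ℂ) (hz : ∀ k, z k ∈ ball c R)
    (U : Set ℂ) (hU : IsOpen U) (hUball : closedBall c R ⊆ U)
    (f : ℂ → ℂ) (hf : AnalyticOnNhd ℂ f U)
    (v : Polynomial ℂ) (hvz : ∀ k, v.eval (z k) ≠ 0)
    (u : Polynomial ℂ) (hu : u.degree < (N : WithBot ℕ))
    (hinterp : ∀ k : Fin N,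
      ∀ j < (Finset.univ.filter fun i => z i = z k).card,
        iteratedDeriv j (fun w => u.eval w / v.eval w) (z k)
          = iteratedDeriv j f (z k)) :
    ∀ w ∈ ball c R, v.eval w ≠ 0 →
      f w - u.eval w / v.eval w =
        ((∏ k, (w - z k)) / v.eval w) *
          ((2 * Real.pi * Complex.I)⁻¹ *
            ∮ lam in C(c, R),
              v.eval lam * f lam / ((∏ k, (lam - z k)) * (lam - w))) := by
  intro w hw hvw
  have hR : 0 < R := pos_of_mem_ball hw
  set S : Multiset ℂ := Multiset.map z Finset.univ.val with hS
  have hSball : ∀ a ∈ S, a ∈ ball c R := by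
    intro a ha
    obtain ⟨k, _, rfl⟩ := Multiset.mem_map.mp ha
    exact hz k
  have hSU : ∀ a ∈ S, a ∈ U := fun a ha => hUball (ball_subset_closedBall (hSball a ha))
  have hΩ : ∀ x : ℂ, (∏ k, (x - z k)) = (S.map fun r => x - r).prod := by
    intro x
    rw [hS, Multiset.map_map]
    rfl
  set F : ℂ → ℂ := fun x => v.eval x * f x - u.eval x with hF
  have hFU : AnalyticOnNhd ℂ F U := fun x hx =>
    ((v.differentiable.analyticAt x).mul (hf x hx)).sub (u.differentiable.analyticAt x)
  have hcount : ∀ k : Fin N, S.count (z k)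
      = (Finset.univ.filter fun i => z i = z k).card := by
    intro k
    rw [hS, Multiset.count_map]
    have h1 : (Finset.univ.filter fun i => z i = z k).card
        = Multiset.card (Multiset.filter (fun i => z i = z k) Finset.univ.val) := by
      rw [← Finset.filter_val]
      rfl
    rw [h1]
    congr 1
    exact Multiset.filter_congr (fun i _ => eq_comm)
  have hvanS : ∀ a ∈ S, ∀ j < S.count a, iteratedDeriv j F a = 0 := by
    intro a ha j hj
    obtain ⟨k, _, rfl⟩ := Multiset.mem_map.mp ha
    set m := S.count (z k) with hm
    have hvb : v.eval (z k) ≠ 0 := hvz k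
    have hzkU : z k ∈ U := hSU _ ha
    obtain ⟨p, hp⟩ := hf _ hzkU
    obtain ⟨qs, hq⟩ : AnalyticAt ℂ (fun w => u.eval w / v.eval w) (z k) :=
      (u.differentiable.analyticAt _).div (v.differentiable.analyticAt _) hvb
    have hφ : HasFPowerSeriesAt (fun w => f w - u.eval w / v.eval w) (p - qs) (z k) := by
      exact hp.sub hq
    have hφvan : ∀ i < m, iteratedDeriv i (fun w => f w - u.eval w / v.eval w) (z k) = 0 := by
      intro i hi
      rw [iD_coeff hφ i]
      have e1 := iD_coeff hp i
      have e2 := iD_coeff hq i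
      have e3 := hinterp k i (by rw [← hcount k]; exact hi)
      have e4 : (p - qs).coeff i = p.coeff i - qs.coeff i := rfl
      rw [e4]
      have hfact : (Nat.factorial i : ℂ) ≠ 0 := by exact_mod_cast Nat.factorial_ne_zero i
      have e5 : p.coeff i = qs.coeff i := by
        rw [e2, e1] at e3
        exact (mul_left_cancel₀ hfact e3.symm)
      rw [e5, sub_self, mul_zero]
    obtain ⟨ψ, hψ, hfacφ⟩ := peelAt ⟨p - qs, hφ⟩ m hφvan
    have hvne : ∀ᶠ x in 𝓝 (z k), v.eval x ≠ 0 :=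
      (v.continuous.continuousAt).eventually_ne hvb
    have hev : ∀ᶠ x in 𝓝 (z k), F x = (x - z k) ^ m * (v.eval x * ψ x) := by
      filter_upwards [hvne] with x hx
      have h1 := hfacφ x
      have h2 : F x = v.eval x * (f x - u.eval x / v.eval x) := by
        rw [hF]
        field_simp
      rw [h2, h1]
      ring
    exact factor_vanish (z k) m F _ ((v.differentiable.analyticAt _).mul hψ) hev j hj
  obtain ⟨h, hhU, hfacS⟩ := factor_multiset S hSU F hFU hvanS
  -- pointwise identity on the sphere
  have hcardS : Multiset.card S = N := by simp [hS]
  have hwS : ∀ a ∈ (w ::ₘ S), a ∈ ball c R := by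
    intro a ha
    rcases Multiset.mem_cons.mp ha with rfl | ha
    exacts [hw, hSball a ha]
  have key : Set.EqOn
      (fun lam => v.eval lam * f lam / ((∏ k, (lam - z k)) * (lam - w)))
      (fun lam => u.eval lam / (((w ::ₘ S).map fun r => lam - r).prod)
        + (lam - w)⁻¹ • h lam) (sphere c R) := by
    intro lam hl
    dsimp only
    have hP : (S.map fun r => lam - r).prod ≠ 0 := msProd_ne_zero hSball hl
    have hlw : lam - w ≠ 0 := sub_ne_zero.mpr (sphere_ne_of_ball hw hl)
    have hvf : v.eval lam * f lam
        = u.eval lam + (S.map fun r => lam - r).prod * h lam := by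
      have h0 : eval lam v * f lam - eval lam u
          = (Multiset.map (fun r => lam - r) S).prod * h lam := hfacS lam
      linear_combination h0
    simp only [Multiset.map_cons, Multiset.prod_cons, smul_eq_mul]
    rw [hΩ lam, hvf]
    field_simp
  rw [circleIntegral.integral_congr hR.le key]
  have hint1 : CircleIntegrable
      (fun lam => u.eval lam / (((w ::ₘ S).map fun r => lam - r).prod)) c R :=
    circleIntegrable_poly_div_prod hR.le hwS u
  have hint2 : CircleIntegrable (fun lam => (lam - w)⁻¹ • h lam) c R := by
    apply ContinuousOn.circleIntegrable hR.le
    apply ContinuousOn.fun_smul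
    · exact ContinuousOn.inv₀ ((continuous_id.sub continuous_const).continuousOn)
        (fun lam hl => sub_ne_zero.mpr (sphere_ne_of_ball hw hl))
    · exact (hhU.continuousOn).mono
        (fun x hx => hUball (sphere_subset_closedBall hx))
  rw [circleIntegral_add hint1 hint2]
  have hI1 : (∮ lam in C(c, R), u.eval lam / (((w ::ₘ S).map fun r => lam - r).prod)) = 0 := by
    rw [claimC c R _ hwS u (by rw [Multiset.card_cons, hcardS]; exact hu.trans_le (by
      rw [Nat.cast_withBot, Nat.cast_withBot]
      exact WithBot.coe_le_coe.mpr (Nat.le_succ N)))]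
    rw [Polynomial.coeff_eq_zero_of_degree_lt (by
      rw [Multiset.card_cons, hcardS]
      simpa using hu)]
    ring
  have hI2 : (∮ lam in C(c, R), (lam - w)⁻¹ • h lam)
      = (2 * Real.pi * Complex.I) • h w := by
    apply DiffContOnCl.circleIntegral_sub_inv_smul _ hw
    constructor
    · exact fun x hx => ((hhU x (hUball (ball_subset_closedBall hx))).differentiableAt).differentiableWithinAt
    · rw [closure_ball c hR.ne']
      exact (hhU.continuousOn).mono (fun x hx => hUball hx)
  rw [hI1, hI2, zero_add]
  have hFw : v.eval w * f w - u.eval w = (∏ k, (w - z k)) * h w := by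
    rw [hΩ w]
    exact hfacS w
  have h2pi : (2 * (Real.pi : ℂ) * Complex.I) ≠ 0 := by
    simp [Real.pi_ne_zero, Complex.I_ne_zero]
  rw [smul_eq_mul, inv_mul_cancel_left₀ h2pi]
  field_simp
  linear_combination hFw
end

section
/- Let A ∈ ℂ^{n×n}, b, d ∈ ℂ^n, V ∈ ℂ^{n×n̂}, Λ ∈ ℂ^{n̂×n} with ΛV = I_{n̂}, and set Â = ΛAV, b̂ = Λb, d̂^H = d^H V. Let λ_1, ..., λ_m ∈ ℂ lie neither in σ(A) nor in σ(Â), and let κ_0, χ_0, κ_1, χ_1, ..., κ_m, χ_m be nonnegative integers. Assume the range of V contains the vectors A^j b for 0 ≤ j ≤ κ_0 − 1 and (λ_k I − A)^{−j} b for 1 ≤ j ≤ κ_k, 1 ≤ k ≤ m, and the range of Λ^H contains the vectors (A^H)^j d for 0 ≤ j ≤ χ_0 − 1 and (λ̄_k I − A^H)^{−j} d for 1 ≤ j ≤ χ_k, 1 ≤ k ≤ m. Then for all coefficients g_{j0} (0 ≤ j ≤ κ_0 + χ_0 − 1) and g_{jk} (1 ≤ j ≤ κ_k + χ_k, 1 ≤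 k ≤ m) in ℂ, one has d^H r(A) b = d̂^H r(Â) b̂, where for a square matrix M with λ_k ∉ σ(M), r(M) := Σ_{k=1}^m Σ_{j=1}^{κ_k+χ_k} g_{jk} ((λ_k I − M)^{−1})^j + Σ_{j=0}^{κ_0+χ_0−1} g_{j0} M^j. -/
open Matrix

section KrylovAux

variable {n nh : ℕ}

/-- Projection: if `x` lies in the range of `W` and `L * W = 1`, then `W (L x) = x`. -/
private lemma krylov_proj (W : Matrix (Fin n) (Fin nh) ℂ) (L : Matrix (Fin nh) (Fin n) ℂ)
    (hLW : L * W = 1) {x : Fin n → ℂ} (hx : x ∈ Set.range W.mulVec) :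
    W.mulVec (L.mulVec x) = x := by
  obtain ⟨y, rfl⟩ := hx
  rw [Matrix.mulVec_mulVec, Matrix.mulVec_mulVec, Matrix.mul_assoc, hLW, Matrix.mul_one]

/-- Power exactness, `L`-version. -/
private lemma krylov_pow_L (A : Matrix (Fin n) (Fin n) ℂ) (W : Matrix (Fin n) (Fin nh) ℂ)
    (L : Matrix (Fin nh) (Fin n) ℂ) (hLW : L * W = 1) (b : Fin n → ℂ) (κ : ℕ)
    (hr : ∀ j < κ, (A ^ j).mulVec b ∈ Set.range W.mulVec) :
    ∀ j < κ, ((L * A * W) ^ j).mulVec (L.mulVec b) = L.mulVec ((A ^ j).mulVec b) := by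
  intro j hj
  induction j with
  | zero => simp
  | succ j ih =>
    have hj' : j < κ := Nat.lt_of_succ_lt hj
    have ih' := ih hj'
    calc ((L * A * W) ^ (j + 1)).mulVec (L.mulVec b)
        = (L * A * W).mulVec (((L * A * W) ^ j).mulVec (L.mulVec b)) := by
          rw [Matrix.mulVec_mulVec (L.mulVec b) (L * A * W) ((L * A * W) ^ j), ← pow_succ']
      _ = (L * A).mulVec (W.mulVec (L.mulVec ((A ^ j).mulVec b))) := by
          rw [ih', Matrix.mulVec_mulVec (L.mulVec ((A ^ j).mulVec b)) (L * A) W]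
      _ = (L * A).mulVec ((A ^ j).mulVec b) := by
          rw [krylov_proj W L hLW (hr j hj')]
      _ = L.mulVec ((A ^ (j + 1)).mulVec b) := by
          rw [← Matrix.mulVec_mulVec ((A ^ j).mulVec b) L A,
            Matrix.mulVec_mulVec b A (A ^ j), ← pow_succ']

/-- Power exactness, `W`-version. -/
private lemma krylov_pow_W (A : Matrix (Fin n) (Fin n) ℂ) (W : Matrix (Fin n) (Fin nh) ℂ)
    (L : Matrix (Fin nh) (Fin n) ℂ) (hLW : L * W = 1) (b : Fin n → ℂ) (κ : ℕ)
    (hr : ∀ j < κ, (A ^ j).mulVec b ∈ Set.range W.mulVec) :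
    ∀ j < κ, W.mulVec (((L * A * W) ^ j).mulVec (L.mulVec b)) = (A ^ j).mulVec b := by
  intro j hj
  rw [krylov_pow_L A W L hLW b κ hr j hj, krylov_proj W L hLW (hr j hj)]

/-- Resolvent step. -/
private lemma krylov_res_step (A : Matrix (Fin n) (Fin n) ℂ) (W : Matrix (Fin n) (Fin nh) ℂ)
    (L : Matrix (Fin nh) (Fin n) ℂ) (hLW : L * W = 1) (lam : ℂ)
    (hA : IsUnit (lam • (1 : Matrix (Fin n) (Fin n) ℂ) - A))
    (hAh : IsUnit (lam • (1 : Matrix (Fin nh) (Fin nh) ℂ) - L * A * W))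
    (y : Fin n → ℂ)
    (hy : ((lam • (1 : Matrix (Fin n) (Fin n) ℂ) - A)⁻¹).mulVec y ∈ Set.range W.mulVec) :
    ((lam • (1 : Matrix (Fin nh) (Fin nh) ℂ) - L * A * W)⁻¹).mulVec (L.mulVec y)
      = L.mulVec (((lam • (1 : Matrix (Fin n) (Fin n) ℂ) - A)⁻¹).mulVec y) := by
  set RA := (lam • (1 : Matrix (Fin n) (Fin n) ℂ) - A)⁻¹ with hRA
  set z := RA.mulVec y with hz
  have h1 : (lam • (1 : Matrix (Fin nh) (Fin nh) ℂ) - L * A * W).mulVec (L.mulVec z)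
      = L.mulVec y := by
    have hproj : W.mulVec (L.mulVec z) = z := krylov_proj W L hLW hy
    have hAz : (lam • (1 : Matrix (Fin n) (Fin n) ℂ) - A).mulVec z = y := by
      rw [hz, hRA, Matrix.mulVec_mulVec,
        Matrix.mul_nonsing_inv _ ((Matrix.isUnit_iff_isUnit_det _).mp hA),
        Matrix.one_mulVec]
    calc (lam • (1 : Matrix (Fin nh) (Fin nh) ℂ) - L * A * W).mulVec (L.mulVec z)
        = lam • L.mulVec z - (L * A).mulVec (W.mulVec (L.mulVec z)) := by
          rw [Matrix.sub_mulVec, Matrix.smul_mulVec, Matrix.one_mulVec,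
            Matrix.mulVec_mulVec (L.mulVec z) (L * A) W]
      _ = lam • L.mulVec z - (L * A).mulVec z := by rw [hproj]
      _ = L.mulVec ((lam • (1 : Matrix (Fin n) (Fin n) ℂ) - A).mulVec z) := by
          rw [Matrix.sub_mulVec, Matrix.mulVec_sub, Matrix.smul_mulVec,
            Matrix.one_mulVec, Matrix.mulVec_smul, Matrix.mulVec_mulVec z L A]
      _ = L.mulVec y := by rw [hAz]
  calc ((lam • (1 : Matrix (Fin nh) (Fin nh) ℂ) - L * A * W)⁻¹).mulVec (L.mulVec y)
      = ((lam • (1 : Matrix (Fin nh) (Fin nh) ℂ) - L * A * W)⁻¹).mulVec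
          ((lam • (1 : Matrix (Fin nh) (Fin nh) ℂ) - L * A * W).mulVec (L.mulVec z)) := by
        rw [h1]
    _ = L.mulVec z := by
        rw [Matrix.mulVec_mulVec,
          Matrix.nonsing_inv_mul _ ((Matrix.isUnit_iff_isUnit_det _).mp hAh),
          Matrix.one_mulVec]

/-- Resolvent exactness, `L`-version. -/
private lemma krylov_res_L (A : Matrix (Fin n) (Fin n) ℂ) (W : Matrix (Fin n) (Fin nh) ℂ)
    (L : Matrix (Fin nh) (Fin n) ℂ) (hLW : L * W = 1) (b : Fin n → ℂ) (lam : ℂ)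
    (hA : IsUnit (lam • (1 : Matrix (Fin n) (Fin n) ℂ) - A))
    (hAh : IsUnit (lam • (1 : Matrix (Fin nh) (Fin nh) ℂ) - L * A * W)) (κ : ℕ)
    (hr : ∀ j, 1 ≤ j → j ≤ κ →
      (((lam • (1 : Matrix (Fin n) (Fin n) ℂ) - A)⁻¹) ^ j).mulVec b ∈ Set.range W.mulVec) :
    ∀ j, 1 ≤ j → j ≤ κ →
      (((lam • (1 : Matrix (Fin nh) (Fin nh) ℂ) - L * A * W)⁻¹) ^ j).mulVec (L.mulVec b)
        = L.mulVec ((((lam • (1 : Matrix (Fin n) (Fin n) ℂ) - A)⁻¹) ^ j).mulVec b) := by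
  intro j h1 h2
  induction j with
  | zero => omega
  | succ j ih =>
    rcases Nat.eq_zero_or_pos j with hj0 | hj1
    · subst hj0
      simpa [pow_one] using krylov_res_step A W L hLW lam hA hAh b
        (by simpa [pow_one] using hr 1 le_rfl (by omega))
    · have ih' := ih hj1 (by omega)
      have hstep := krylov_res_step A W L hLW lam hA hAh
        ((((lam • (1 : Matrix (Fin n) (Fin n) ℂ) - A)⁻¹) ^ j).mulVec b)
        (by
          rw [Matrix.mulVec_mulVec, ← pow_succ']
          exact hr (j + 1) (by omega) h2)
      calc (((lam • (1 : Matrix (Fin nh) (Fin nh) ℂ) - L * A * W)⁻¹) ^ (j + 1)).mulVec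
            (L.mulVec b)
          = ((lam • (1 : Matrix (Fin nh) (Fin nh) ℂ) - L * A * W)⁻¹).mulVec
              ((((lam • (1 : Matrix (Fin nh) (Fin nh) ℂ) - L * A * W)⁻¹) ^ j).mulVec
                (L.mulVec b)) := by
            rw [Matrix.mulVec_mulVec (L.mulVec b)
              ((lam • (1 : Matrix (Fin nh) (Fin nh) ℂ) - L * A * W)⁻¹)
              (((lam • (1 : Matrix (Fin nh) (Fin nh) ℂ) - L * A * W)⁻¹) ^ j), ← pow_succ']
        _ = L.mulVec ((((lam • (1 : Matrix (Fin n) (Fin n) ℂ) - A)⁻¹) ^ (j + 1)).mulVec b) := by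
            rw [ih', hstep,
              Matrix.mulVec_mulVec b ((lam • (1 : Matrix (Fin n) (Fin n) ℂ) - A)⁻¹)
                (((lam • (1 : Matrix (Fin n) (Fin n) ℂ) - A)⁻¹) ^ j),
              ← pow_succ']

/-- Dot-product transposition helper. -/
private lemma krylov_dot {p q : ℕ} (M : Matrix (Fin p) (Fin q) ℂ) (u : Fin p → ℂ)
    (x : Fin q → ℂ) :
    star u ⬝ᵥ M.mulVec x = star (Mᴴ.mulVec u) ⬝ᵥ x := by
  rw [Matrix.star_mulVec, Matrix.conjTranspose_conjTranspose, Matrix.dotProduct_mulVec]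

private lemma krylov_transpose_one (W : Matrix (Fin n) (Fin nh) ℂ)
    (L : Matrix (Fin nh) (Fin n) ℂ) (hLW : L * W = 1) : Wᴴ * Lᴴ = 1 := by
  rw [← Matrix.conjTranspose_mul, hLW, Matrix.conjTranspose_one]

private lemma krylov_transpose_red (A : Matrix (Fin n) (Fin n) ℂ)
    (W : Matrix (Fin n) (Fin nh) ℂ) (L : Matrix (Fin nh) (Fin n) ℂ) :
    Wᴴ * Aᴴ * Lᴴ = (L * A * W)ᴴ := by
  rw [Matrix.conjTranspose_mul, Matrix.conjTranspose_mul, Matrix.mul_assoc]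

/-- Two-sided power matching. -/
private lemma krylov_pow_match (A : Matrix (Fin n) (Fin n) ℂ)
    (W : Matrix (Fin n) (Fin nh) ℂ) (L : Matrix (Fin nh) (Fin n) ℂ) (hLW : L * W = 1)
    (b d : Fin n → ℂ) (κ χ : ℕ)
    (hrb : ∀ j < κ, (A ^ j).mulVec b ∈ Set.range W.mulVec)
    (hrd : ∀ j < χ, (Aᴴ ^ j).mulVec d ∈ Set.range Lᴴ.mulVec) :
    ∀ j < κ + χ, star d ⬝ᵥ (A ^ j).mulVec b
      = star d ⬝ᵥ (W * (L * A * W) ^ j).mulVec (L.mulVec b) := by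
  intro j hj
  have hdualL := krylov_pow_L Aᴴ Lᴴ Wᴴ (krylov_transpose_one W L hLW) d χ hrd
  by_cases hjκ : j < κ
  · calc star d ⬝ᵥ (A ^ j).mulVec b
        = star d ⬝ᵥ W.mulVec (((L * A * W) ^ j).mulVec (L.mulVec b)) := by
          rw [krylov_pow_W A W L hLW b κ hrb j hjκ]
      _ = star d ⬝ᵥ (W * (L * A * W) ^ j).mulVec (L.mulVec b) := by
          rw [Matrix.mulVec_mulVec]
  · rcases Nat.eq_zero_or_pos κ with hκ0 | hκ1
    · -- fully dual: j < χ
      have hjχ : j < χ := by omega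
      calc star d ⬝ᵥ (A ^ j).mulVec b
          = star ((A ^ j)ᴴ.mulVec d) ⬝ᵥ b := krylov_dot (A ^ j) d b
        _ = star (Lᴴ.mulVec (Wᴴ.mulVec ((Aᴴ ^ j).mulVec d))) ⬝ᵥ b := by
            rw [Matrix.conjTranspose_pow,
              krylov_proj Lᴴ Wᴴ (krylov_transpose_one W L hLW) (hrd j hjχ)]
        _ = star (Wᴴ.mulVec ((Aᴴ ^ j).mulVec d)) ⬝ᵥ L.mulVec b :=
            (krylov_dot L (Wᴴ.mulVec ((Aᴴ ^ j).mulVec d)) b).symm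
        _ = star (((L * A * W) ^ j)ᴴ.mulVec (Wᴴ.mulVec d)) ⬝ᵥ L.mulVec b := by
            rw [← hdualL j hjχ, krylov_transpose_red, Matrix.conjTranspose_pow]
        _ = star (Wᴴ.mulVec d) ⬝ᵥ ((L * A * W) ^ j).mulVec (L.mulVec b) :=
            (krylov_dot ((L * A * W) ^ j) (Wᴴ.mulVec d) (L.mulVec b)).symm
        _ = star d ⬝ᵥ W.mulVec (((L * A * W) ^ j).mulVec (L.mulVec b)) :=
            (krylov_dot W d (((L * A * W) ^ j).mulVec (L.mulVec b))).symm
        _ = star d ⬝ᵥ (W * (L * A * W) ^ j).mulVec (L.mulVec b) := by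
            rw [Matrix.mulVec_mulVec]
    · -- mixed case: j = q + 1 + p with p = κ - 1, q = j - κ
      have hjκ' : κ ≤ j := by omega
      set p := κ - 1 with hp
      set q := j - κ with hq
      have hqχ : q < χ := by omega
      have e1 : q + κ = j := by omega
      have e2 : p + 1 = κ := by omega
      have hpκ : p < κ := by omega
      have hmidL : ((L * A * W) ^ p).mulVec (L.mulVec b) = L.mulVec ((A ^ p).mulVec b) :=
        krylov_pow_L A W L hLW b κ hrb p hpκ
      have hmid2 : (L * A * W).mulVec (L.mulVec ((A ^ p).mulVec b))
          = L.mulVec ((A ^ κ).mulVec b) := by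
        rw [← Matrix.mulVec_mulVec (L.mulVec ((A ^ p).mulVec b)) (L * A) W,
          krylov_proj W L hLW (hrb p hpκ),
          ← Matrix.mulVec_mulVec ((A ^ p).mulVec b) L A,
          Matrix.mulVec_mulVec b A (A ^ p), ← pow_succ', e2]
      have hsplit : (L * A * W) ^ j
          = (L * A * W) ^ q * ((L * A * W) * (L * A * W) ^ p) := by
        rw [← pow_succ', e2, ← pow_add, e1]
      calc star d ⬝ᵥ (A ^ j).mulVec b
          = star d ⬝ᵥ (A ^ q).mulVec ((A ^ κ).mulVec b) := by
            rw [Matrix.mulVec_mulVec b (A ^ q) (A ^ κ), ← pow_add, e1]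
        _ = star ((Aᴴ ^ q).mulVec d) ⬝ᵥ (A ^ κ).mulVec b := by
            rw [krylov_dot (A ^ q) d, Matrix.conjTranspose_pow]
        _ = star (Lᴴ.mulVec (Wᴴ.mulVec ((Aᴴ ^ q).mulVec d))) ⬝ᵥ (A ^ κ).mulVec b := by
            rw [krylov_proj Lᴴ Wᴴ (krylov_transpose_one W L hLW) (hrd q hqχ)]
        _ = star (Wᴴ.mulVec ((Aᴴ ^ q).mulVec d)) ⬝ᵥ L.mulVec ((A ^ κ).mulVec b) :=
            (krylov_dot L _ _).symm
        _ = star (((L * A * W) ^ q)ᴴ.mulVec (Wᴴ.mulVec d)) ⬝ᵥ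
              L.mulVec ((A ^ κ).mulVec b) := by
            rw [← hdualL q hqχ, krylov_transpose_red, Matrix.conjTranspose_pow]
        _ = star (Wᴴ.mulVec d) ⬝ᵥ ((L * A * W) ^ q).mulVec
              (L.mulVec ((A ^ κ).mulVec b)) := (krylov_dot ((L * A * W) ^ q) _ _).symm
        _ = star d ⬝ᵥ W.mulVec (((L * A * W) ^ q).mulVec
              (L.mulVec ((A ^ κ).mulVec b))) := (krylov_dot W _ _).symm
        _ = star d ⬝ᵥ W.mulVec (((L * A * W) ^ q).mulVec
              ((L * A * W).mulVec (((L * A * W) ^ p).mulVec (L.mulVec b)))) := by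
            rw [hmidL, hmid2]
        _ = star d ⬝ᵥ (W * (L * A * W) ^ j).mulVec (L.mulVec b) := by
            rw [Matrix.mulVec_mulVec (L.mulVec b) (L * A * W) ((L * A * W) ^ p),
              Matrix.mulVec_mulVec (L.mulVec b) ((L * A * W) ^ q)
                ((L * A * W) * (L * A * W) ^ p),
              ← hsplit, Matrix.mulVec_mulVec (L.mulVec b) W ((L * A * W) ^ j)]

/-- Two-sided resolvent matching. -/
private lemma krylov_res_match (A : Matrix (Fin n) (Fin n) ℂ)
    (W : Matrix (Fin n) (Fin nh) ℂ) (L : Matrix (Fin nh) (Fin n) ℂ) (hLW : L * W = 1)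
    (b d : Fin n → ℂ) (lam : ℂ)
    (hA : IsUnit (lam • (1 : Matrix (Fin n) (Fin n) ℂ) - A))
    (hAh : IsUnit (lam • (1 : Matrix (Fin nh) (Fin nh) ℂ) - L * A * W))
    (κ χ : ℕ)
    (hrb : ∀ j, 1 ≤ j → j ≤ κ →
      (((lam • (1 : Matrix (Fin n) (Fin n) ℂ) - A)⁻¹) ^ j).mulVec b ∈ Set.range W.mulVec)
    (hrd : ∀ j, 1 ≤ j → j ≤ χ →
      ((((starRingEnd ℂ) lam • (1 : Matrix (Fin n) (Fin n) ℂ) - Aᴴ)⁻¹) ^ j).mulVec d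
        ∈ Set.range Lᴴ.mulVec) :
    ∀ j, 1 ≤ j → j ≤ κ + χ →
      star d ⬝ᵥ ((((lam • (1 : Matrix (Fin n) (Fin n) ℂ) - A)⁻¹) ^ j)).mulVec b
        = star d ⬝ᵥ (W * (((lam • (1 : Matrix (Fin nh) (Fin nh) ℂ) - L * A * W)⁻¹) ^ j)).mulVec
            (L.mulVec b) := by
  intro j h1 h2
  have hsubH : ∀ {p : ℕ} (M : Matrix (Fin p) (Fin p) ℂ),
      (lam • (1 : Matrix (Fin p) (Fin p) ℂ) - M)ᴴ
        = (starRingEnd ℂ) lam • (1 : Matrix (Fin p) (Fin p) ℂ) - Mᴴ := by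
    intro p M
    rw [Matrix.conjTranspose_sub, Matrix.conjTranspose_smul, Matrix.conjTranspose_one]
    rfl
  have hresH : ((lam • (1 : Matrix (Fin n) (Fin n) ℂ) - A)⁻¹)ᴴ
      = ((starRingEnd ℂ) lam • (1 : Matrix (Fin n) (Fin n) ℂ) - Aᴴ)⁻¹ := by
    rw [Matrix.conjTranspose_nonsing_inv, hsubH]
  have hresHh : ((lam • (1 : Matrix (Fin nh) (Fin nh) ℂ) - L * A * W)⁻¹)ᴴ
      = ((starRingEnd ℂ) lam • (1 : Matrix (Fin nh) (Fin nh) ℂ) - (L * A * W)ᴴ)⁻¹ := by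
    rw [Matrix.conjTranspose_nonsing_inv, hsubH]
  have hUAH : IsUnit ((starRingEnd ℂ) lam • (1 : Matrix (Fin n) (Fin n) ℂ) - Aᴴ) := by
    rw [← hsubH, ← Matrix.star_eq_conjTranspose, isUnit_star]; exact hA
  have hUAhH : IsUnit ((starRingEnd ℂ) lam • (1 : Matrix (Fin nh) (Fin nh) ℂ)
      - (Wᴴ * Aᴴ * Lᴴ)) := by
    rw [krylov_transpose_red, ← hsubH, ← Matrix.star_eq_conjTranspose, isUnit_star]
    exact hAh
  have hdualresL := krylov_res_L Aᴴ Lᴴ Wᴴ (krylov_transpose_one W L hLW) d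
    ((starRingEnd ℂ) lam) hUAH hUAhH χ hrd
  by_cases hjκ : j ≤ κ
  · calc star d ⬝ᵥ ((((lam • (1 : Matrix (Fin n) (Fin n) ℂ) - A)⁻¹) ^ j)).mulVec b
        = star d ⬝ᵥ W.mulVec
            ((((lam • (1 : Matrix (Fin nh) (Fin nh) ℂ) - L * A * W)⁻¹) ^ j).mulVec
              (L.mulVec b)) := by
          rw [krylov_res_L A W L hLW b lam hA hAh κ hrb j h1 hjκ,
            krylov_proj W L hLW (hrb j h1 hjκ)]
      _ = star d ⬝ᵥ (W * (((lam • (1 : Matrix (Fin nh) (Fin nh) ℂ) - L * A * W)⁻¹) ^ j)).mulVec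
            (L.mulVec b) := by rw [Matrix.mulVec_mulVec]
  · set RA := (lam • (1 : Matrix (Fin n) (Fin n) ℂ) - A)⁻¹ with hRAdef
    set RAh := (lam • (1 : Matrix (Fin nh) (Fin nh) ℂ) - L * A * W)⁻¹ with hRAhdef
    set q := j - κ with hqdef
    have hq1 : 1 ≤ q := by omega
    have hqχ : q ≤ χ := by omega
    have e1 : q + κ = j := by omega
    have hmidL : (RAh ^ κ).mulVec (L.mulVec b) = L.mulVec ((RA ^ κ).mulVec b) := by
      rcases Nat.eq_zero_or_pos κ with hκ0 | hκ1
      · rw [hκ0]; simp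
      · exact krylov_res_L A W L hLW b lam hA hAh κ hrb κ hκ1 le_rfl
    have hdq : ((RAh ^ q)ᴴ).mulVec (Wᴴ.mulVec d) = Wᴴ.mulVec (((RA ^ q)ᴴ).mulVec d) := by
      have h := hdualresL q hq1 hqχ
      rw [krylov_transpose_red] at h
      rw [Matrix.conjTranspose_pow, Matrix.conjTranspose_pow, hRAhdef, hresHh, hRAdef, hresH]
      exact h
    have hdproj : Lᴴ.mulVec (Wᴴ.mulVec (((RA ^ q)ᴴ).mulVec d)) = ((RA ^ q)ᴴ).mulVec d := by
      apply krylov_proj Lᴴ Wᴴ (krylov_transpose_one W L hLW)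
      rw [Matrix.conjTranspose_pow, hRAdef, hresH]
      exact hrd q hq1 hqχ
    calc star d ⬝ᵥ ((RA ^ j)).mulVec b
        = star d ⬝ᵥ (RA ^ q).mulVec ((RA ^ κ).mulVec b) := by
          rw [Matrix.mulVec_mulVec b (RA ^ q) (RA ^ κ), ← pow_add, e1]
      _ = star (((RA ^ q)ᴴ).mulVec d) ⬝ᵥ (RA ^ κ).mulVec b := krylov_dot (RA ^ q) d _
      _ = star (Lᴴ.mulVec (Wᴴ.mulVec (((RA ^ q)ᴴ).mulVec d))) ⬝ᵥ (RA ^ κ).mulVec b := by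
          rw [hdproj]
      _ = star (Wᴴ.mulVec (((RA ^ q)ᴴ).mulVec d)) ⬝ᵥ L.mulVec ((RA ^ κ).mulVec b) :=
          (krylov_dot L _ _).symm
      _ = star (((RAh ^ q)ᴴ).mulVec (Wᴴ.mulVec d)) ⬝ᵥ L.mulVec ((RA ^ κ).mulVec b) := by
          rw [hdq]
      _ = star (Wᴴ.mulVec d) ⬝ᵥ (RAh ^ q).mulVec (L.mulVec ((RA ^ κ).mulVec b)) :=
          (krylov_dot (RAh ^ q) _ _).symm
      _ = star d ⬝ᵥ W.mulVec ((RAh ^ q).mulVec ((RAh ^ κ).mulVec (L.mulVec b))) := by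
          rw [hmidL, ← krylov_dot W d]
      _ = star d ⬝ᵥ (W * RAh ^ j).mulVec (L.mulVec b) := by
          rw [Matrix.mulVec_mulVec (L.mulVec b) (RAh ^ q) (RAh ^ κ), ← pow_add, e1,
            Matrix.mulVec_mulVec (L.mulVec b) W (RAh ^ j)]

end KrylovAux

/- STATEMENT 11 (two-sided rational Krylov exactness): under the range conditions on V
   and Λᴴ, one has dᴴ r(A) b = d̂ᴴ r(Â) b̂ for every rational function
   r(M) = Σₖ Σⱼ g_{jk} ((λₖI − M)⁻¹)ʲ + Σⱼ g_{j0} Mʲ. -/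
theorem two_sided_rational_krylov_exactness
    {n nh m : ℕ} (A : Matrix (Fin n) (Fin n) ℂ) (b d : Fin n → ℂ)
    (V : Matrix (Fin n) (Fin nh) ℂ) (Λ : Matrix (Fin nh) (Fin n) ℂ)
    (hΛV : Λ * V = 1)
    (Ah : Matrix (Fin nh) (Fin nh) ℂ) (hAh : Ah = Λ * A * V)
    (lam : Fin m → ℂ)
    (hlamA : ∀ k, lam k ∉ spectrum ℂ A)
    (hlamAh : ∀ k, lam k ∉ spectrum ℂ Ah)
    (κ₀ χ₀ : ℕ) (κ χ : Fin m → ℕ)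
    (hVpow : ∀ j < κ₀, (A ^ j).mulVec b ∈ Set.range V.mulVec)
    (hVres : ∀ k : Fin m, ∀ j, 1 ≤ j → j ≤ κ k →
      (((lam k • (1 : Matrix (Fin n) (Fin n) ℂ) - A)⁻¹) ^ j).mulVec b
        ∈ Set.range V.mulVec)
    (hΛpow : ∀ j < χ₀, (Aᴴ ^ j).mulVec d ∈ Set.range Λᴴ.mulVec)
    (hΛres : ∀ k : Fin m, ∀ j, 1 ≤ j → j ≤ χ k →
      ((((starRingEnd ℂ) (lam k) • (1 : Matrix (Fin n) (Fin n) ℂ) - Aᴴ)⁻¹) ^ j).mulVec d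
        ∈ Set.range Λᴴ.mulVec)
    (g₀ : ℕ → ℂ) (g : Fin m → ℕ → ℂ) :
    star d ⬝ᵥ
      ((∑ k : Fin m, ∑ j ∈ Finset.Icc 1 (κ k + χ k),
          g k j • ((lam k • (1 : Matrix (Fin n) (Fin n) ℂ) - A)⁻¹) ^ j)
        + ∑ j ∈ Finset.range (κ₀ + χ₀), g₀ j • A ^ j).mulVec b
    = star d ⬝ᵥ
      (V * ((∑ k : Fin m, ∑ j ∈ Finset.Icc 1 (κ k + χ k),
          g k j • ((lam k • (1 : Matrix (Fin nh) (Fin nh) ℂ) - Ah)⁻¹) ^ j)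
        + ∑ j ∈ Finset.range (κ₀ + χ₀), g₀ j • Ah ^ j)).mulVec (Λ.mulVec b) := by
  classical
  subst hAh
  -- unit facts
  have hUA : ∀ k : Fin m, IsUnit (lam k • (1 : Matrix (Fin n) (Fin n) ℂ) - A) := by
    intro k
    have := (spectrum.notMem_iff).mp (hlamA k)
    rwa [Algebra.algebraMap_eq_smul_one] at this
  have hUAh : ∀ k : Fin m,
      IsUnit (lam k • (1 : Matrix (Fin nh) (Fin nh) ℂ) - Λ * A * V) := by
    intro k
    have := (spectrum.notMem_iff).mp (hlamAh k)
    rwa [Algebra.algebraMap_eq_smul_one] at this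
  -- linear functionals
  let φ : Matrix (Fin n) (Fin n) ℂ →ₗ[ℂ] ℂ :=
    { toFun := fun M => star d ⬝ᵥ M.mulVec b
      map_add' := fun M N => by simp [Matrix.add_mulVec, dotProduct_add]
      map_smul' := fun c M => by simp [Matrix.smul_mulVec] }
  let ψ : Matrix (Fin nh) (Fin nh) ℂ →ₗ[ℂ] ℂ :=
    { toFun := fun M => star d ⬝ᵥ (V * M).mulVec (Λ.mulVec b)
      map_add' := fun M N => by
        simp [Matrix.mul_add, Matrix.add_mul, Matrix.add_mulVec, dotProduct_add]
      map_smul' := fun c M => by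
        simp [Matrix.mul_smul, Matrix.smul_mulVec] }
  show φ _ = ψ _
  rw [map_add, map_add, map_sum, map_sum, map_sum, map_sum]
  congr 1
  · apply Finset.sum_congr rfl
    intro k _
    rw [map_sum, map_sum]
    apply Finset.sum_congr rfl
    intro j hj
    rw [_root_.map_smul, _root_.map_smul]
    rw [Finset.mem_Icc] at hj
    congr 1
    exact krylov_res_match A V Λ hΛV b d (lam k) (hUA k) (hUAh k) (κ k) (χ k)
      (hVres k) (hΛres k) j hj.1 hj.2
  · apply Finset.sum_congr rfl
    intro j hj
    rw [_root_.map_smul, _root_.map_smul]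
    rw [Finset.mem_range] at hj
    congr 1
    exact krylov_pow_match A V Λ hΛV b d κ₀ χ₀ hVpow hΛpow j hj
end

section
/- Let A ∈ ℂ^{n×n}, b ∈ ℂ^n, V ∈ ℂ^{n×n̂} with V^H V = I_{n̂}, and set Â = V^H A V, b̂ = V^H b. Let λ_1, ..., λ_m ∈ ℂ lie neither in σ(A) nor in σ(Â), and let κ_0, κ_1, ..., κ_m be nonnegative integers. Assume the range of V contains the vectors A^j b for 0 ≤ j ≤ κ_0 − 1 and (λ_k I − A)^{−j} b for 1 ≤ j ≤ κ_k, 1 ≤ k ≤ m. Then for all coefficients g_{j0} (0 ≤ j ≤ κ_0 − 1) and g_{jk} (1 ≤ j ≤ κ_k, 1 ≤ k ≤ m) in ℂ, one has r(A) b = V r(Â) b̂, where for a square matrix M with λ_k ∉ σ(M), r(M) := Σ_{k=1}^m Σ_{j=1}^{κ_k} g_{jk} ((λ_k I − M)^{−1})^j + Σ_{j=0}^{κ_0−1} g_{j0} M^j. -/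
open Matrix

lemma sum_mulVec' {α ι n' m' : Type*} [Fintype n'] [NonUnitalNonAssocSemiring α]
    (s : Finset ι) (f : ι → Matrix m' n' α) (b : n' → α) :
    (∑ i ∈ s, f i).mulVec b = ∑ i ∈ s, (f i).mulVec b := by
  induction s using Finset.cons_induction with
  | empty => simp [Matrix.mulVec, dotProduct]
  | cons i s hi ih => simp [Finset.sum_cons, Matrix.add_mulVec, ih]

lemma mulVec_sum' {α ι n' m' : Type*} [Fintype n'] [NonUnitalNonAssocSemiring α]
    (s : Finset ι) (M : Matrix m' n' α) (f : ι → n' → α) :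
    M.mulVec (∑ i ∈ s, f i) = ∑ i ∈ s, M.mulVec (f i) := by
  induction s using Finset.cons_induction with
  | empty => simp [Matrix.mulVec, dotProduct]
  | cons i s hi ih => simp [Finset.sum_cons, Matrix.mulVec_add, ih]

theorem one_sided_rational_krylov_exactness
    {n nh m : ℕ} (A : Matrix (Fin n) (Fin n) ℂ) (b : Fin n → ℂ)
    (V : Matrix (Fin n) (Fin nh) ℂ) (hV : Vᴴ * V = 1)
    (Ah : Matrix (Fin nh) (Fin nh) ℂ) (hAh : Ah = Vᴴ * A * V)
    (lam : Fin m → ℂ)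
    (hlamA : ∀ k, lam k ∉ spectrum ℂ A)
    (hlamAh : ∀ k, lam k ∉ spectrum ℂ Ah)
    (κ₀ : ℕ) (κ : Fin m → ℕ)
    (hVpow : ∀ j < κ₀, (A ^ j).mulVec b ∈ Set.range V.mulVec)
    (hVres : ∀ k : Fin m, ∀ j, 1 ≤ j → j ≤ κ k →
      (((lam k • (1 : Matrix (Fin n) (Fin n) ℂ) - A)⁻¹) ^ j).mulVec b
        ∈ Set.range V.mulVec)
    (g₀ : ℕ → ℂ) (g : Fin m → ℕ → ℂ) :
    ((∑ k : Fin m, ∑ j ∈ Finset.Icc 1 (κ k),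
        g k j • ((lam k • (1 : Matrix (Fin n) (Fin n) ℂ) - A)⁻¹) ^ j)
      + ∑ j ∈ Finset.range κ₀, g₀ j • A ^ j).mulVec b
    = (V * ((∑ k : Fin m, ∑ j ∈ Finset.Icc 1 (κ k),
        g k j • ((lam k • (1 : Matrix (Fin nh) (Fin nh) ℂ) - Ah)⁻¹) ^ j)
      + ∑ j ∈ Finset.range κ₀, g₀ j • Ah ^ j)).mulVec (Vᴴ.mulVec b) := by
  have hproj : ∀ x : Fin n → ℂ, x ∈ Set.range V.mulVec →
      V.mulVec (Vᴴ.mulVec x) = x := by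
    rintro x ⟨y, rfl⟩
    rw [mulVec_mulVec, mulVec_mulVec, Matrix.mul_assoc, hV, Matrix.mul_one]
  have hVV : ∀ y : Fin nh → ℂ, Vᴴ.mulVec (V.mulVec y) = y := by
    intro y; rw [mulVec_mulVec, hV, one_mulVec]
  set S : Fin m → Matrix (Fin n) (Fin n) ℂ :=
    fun k => lam k • (1 : Matrix (Fin n) (Fin n) ℂ) - A with hS
  set Sh : Fin m → Matrix (Fin nh) (Fin nh) ℂ :=
    fun k => lam k • (1 : Matrix (Fin nh) (Fin nh) ℂ) - Ah with hSh
  have hSunit : ∀ k, IsUnit (S k).det := by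
    intro k
    rw [← Matrix.isUnit_iff_isUnit_det]
    have := (spectrum.notMem_iff).mp (hlamA k)
    rwa [Algebra.algebraMap_eq_smul_one] at this
  have hShunit : ∀ k, IsUnit (Sh k).det := by
    intro k
    rw [← Matrix.isUnit_iff_isUnit_det]
    have := (spectrum.notMem_iff).mp (hlamAh k)
    rwa [Algebra.algebraMap_eq_smul_one] at this
  -- vector-level inverse cancellation
  have hScancel : ∀ (k : Fin m) (v : Fin n → ℂ),
      (S k).mulVec ((S k)⁻¹.mulVec v) = v := by
    intro k v
    rw [mulVec_mulVec, Matrix.mul_nonsing_inv _ (hSunit k), one_mulVec]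
  have hShcancel : ∀ (k : Fin m) (v : Fin nh → ℂ),
      (Sh k)⁻¹.mulVec ((Sh k).mulVec v) = v := by
    intro k v
    rw [mulVec_mulVec, Matrix.nonsing_inv_mul _ (hShunit k), one_mulVec]
  -- intertwining
  have hintA : ∀ x : Fin n → ℂ, V.mulVec (Vᴴ.mulVec x) = x →
      Ah.mulVec (Vᴴ.mulVec x) = Vᴴ.mulVec (A.mulVec x) := by
    intro x hx
    simp only [hAh, ← mulVec_mulVec, hx]
  have hint : ∀ (k : Fin m) (x : Fin n → ℂ), V.mulVec (Vᴴ.mulVec x) = x →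
      (Sh k).mulVec (Vᴴ.mulVec x) = Vᴴ.mulVec ((S k).mulVec x) := by
    intro k x hx
    simp only [hSh, hS, sub_mulVec, smul_mulVec, one_mulVec,
      mulVec_sub, hintA x hx]
    congr 1
    rw [Matrix.mulVec_smul]
  -- power part
  have hpow : ∀ j < κ₀,
      (A ^ j).mulVec b = V.mulVec ((Ah ^ j).mulVec (Vᴴ.mulVec b)) := by
    intro j hj
    induction j with
    | zero =>
      simpa using (hproj _ (by simpa using hVpow 0 hj)).symm
    | succ j ih =>
      have hj' : j < κ₀ := Nat.lt_of_succ_lt hj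
      have hxj : V.mulVec (Vᴴ.mulVec ((A ^ j).mulVec b)) = (A ^ j).mulVec b :=
        hproj _ (hVpow j hj')
      have h1 : Vᴴ.mulVec ((A ^ (j+1)).mulVec b)
          = (Ah ^ (j+1)).mulVec (Vᴴ.mulVec b) := by
        calc Vᴴ.mulVec ((A ^ (j+1)).mulVec b)
            = Vᴴ.mulVec (A.mulVec ((A ^ j).mulVec b)) := by
              rw [pow_succ', ← mulVec_mulVec]
          _ = Ah.mulVec (Vᴴ.mulVec ((A ^ j).mulVec b)) := (hintA _ hxj).symm
          _ = Ah.mulVec (Vᴴ.mulVec (V.mulVec ((Ah ^ j).mulVec (Vᴴ.mulVec b)))) := by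
              rw [ih hj']
          _ = Ah.mulVec ((Ah ^ j).mulVec (Vᴴ.mulVec b)) := by rw [hVV]
          _ = (Ah ^ (j+1)).mulVec (Vᴴ.mulVec b) := by
              rw [pow_succ', ← mulVec_mulVec]
      rw [← h1, hproj _ (hVpow (j+1) hj)]
  -- resolvent part
  have hres : ∀ (k : Fin m) (j : ℕ), 1 ≤ j → j ≤ κ k →
      ((S k)⁻¹ ^ j).mulVec b
        = V.mulVec (((Sh k)⁻¹ ^ j).mulVec (Vᴴ.mulVec b)) := by
    intro k j h1 h2
    induction j, h1 using Nat.le_induction with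
    | base =>
      have hx : V.mulVec (Vᴴ.mulVec (((S k)⁻¹ ^ 1).mulVec b))
          = ((S k)⁻¹ ^ 1).mulVec b := hproj _ (hVres k 1 le_rfl h2)
      have key : (Sh k).mulVec (Vᴴ.mulVec (((S k)⁻¹ ^ 1).mulVec b))
          = Vᴴ.mulVec b := by
        rw [hint k _ hx, pow_one, hScancel]
      have h3 : Vᴴ.mulVec (((S k)⁻¹ ^ 1).mulVec b)
          = ((Sh k)⁻¹ ^ 1).mulVec (Vᴴ.mulVec b) := by
        rw [pow_one ((Sh k)⁻¹), ← key, hShcancel]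
      rw [← hx, h3]
    | succ j hj ih =>
      have hjκ : j ≤ κ k := le_trans (Nat.le_succ j) h2
      have ihv := ih hjκ
      have hx : V.mulVec (Vᴴ.mulVec (((S k)⁻¹ ^ (j+1)).mulVec b))
          = ((S k)⁻¹ ^ (j+1)).mulVec b := hproj _ (hVres k (j+1) (Nat.le_add_left 1 j) h2)
      have key : (Sh k).mulVec (Vᴴ.mulVec (((S k)⁻¹ ^ (j+1)).mulVec b))
          = ((Sh k)⁻¹ ^ j).mulVec (Vᴴ.mulVec b) := by
        calc (Sh k).mulVec (Vᴴ.mulVec (((S k)⁻¹ ^ (j+1)).mulVec b))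
            = Vᴴ.mulVec ((S k).mulVec (((S k)⁻¹ ^ (j+1)).mulVec b)) := hint k _ hx
          _ = Vᴴ.mulVec ((S k).mulVec ((S k)⁻¹.mulVec (((S k)⁻¹ ^ j).mulVec b))) := by
              rw [pow_succ', ← mulVec_mulVec]
          _ = Vᴴ.mulVec (((S k)⁻¹ ^ j).mulVec b) := by rw [hScancel]
          _ = Vᴴ.mulVec (V.mulVec (((Sh k)⁻¹ ^ j).mulVec (Vᴴ.mulVec b))) := by rw [ihv]
          _ = ((Sh k)⁻¹ ^ j).mulVec (Vᴴ.mulVec b) := hVV _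
      have h3 : Vᴴ.mulVec (((S k)⁻¹ ^ (j+1)).mulVec b)
          = ((Sh k)⁻¹ ^ (j+1)).mulVec (Vᴴ.mulVec b) := by
        rw [← hShcancel k (Vᴴ.mulVec (((S k)⁻¹ ^ (j+1)).mulVec b)), key,
          pow_succ', ← mulVec_mulVec]
      rw [← hx, h3]
  -- assemble
  rw [← Matrix.mulVec_mulVec (M := V)]
  simp only [Matrix.add_mulVec, sum_mulVec', Matrix.smul_mulVec,
    Matrix.mulVec_add, mulVec_sum', Matrix.mulVec_smul]
  congr 1
  · refine Finset.sum_congr rfl fun k _ => Finset.sum_congr rfl fun j hj => ?_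
    rw [Finset.mem_Icc] at hj
    rw [hres k j hj.1 hj.2]
  · refine Finset.sum_congr rfl fun j hj => ?_
    rw [Finset.mem_range] at hj
    rw [hpow j hj]
end

section
/- Let A ∈ ℂ^{n×n}, b ∈ ℂ^n, and V ∈ ℂ^{n×n̂} with V^H V = I_{n̂}; set Â = V^H A V, b̂ = V^H b. Let λ_1, ..., λ_m ∈ ℂ lie neither in σ(A) nor in σ(Â), let κ_0, κ_1, ..., κ_m be nonnegative integers, and assume the range of V contains A^j b for 0 ≤ j ≤ κ_0 − 1 and (λ_k I − A)^{−j} b for 1 ≤ j ≤ κ_k, 1 ≤ k ≤ m. Fix t ∈ ℝ and suppose there are coefficients g_{jk}(t) ∈ ℂ such that the rational function r_t(λ) = Σ_{k=1}^m Σ_{j=1}^{κ_k} g_{jk}(t)/(λ_k − λ)^j + Σ_{j=0}^{κ_0−1} g_{j0}(t) λ^j satisfies r_t^{(j)}(μ̂) = t^j e^{t μ̂} for every eigenvalue μ̂ of Â and every 0 ≤ j ≤ ŵ(μ̂) − 1, where ŵ(μ̂) is the algebraic multiplicity of μ̂. Then r_t(A) b = V exp(t·Â) b̂, where r_t(A)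 := Σ_{k=1}^m Σ_{j=1}^{κ_k} g_{jk}(t) ((λ_k I − A)^{−1})^j + Σ_{j=0}^{κ_0−1} g_{j0}(t) A^j. -/
open Matrix Polynomial


section helpers
variable {n nh : ℕ}

lemma isUnit_smul_one_sub {N : ℕ} {z : ℂ} {M : Matrix (Fin N) (Fin N) ℂ}
    (h : z ∉ spectrum ℂ M) : IsUnit (z • (1 : Matrix (Fin N) (Fin N) ℂ) - M) := by
  rw [spectrum.notMem_iff] at h
  rwa [Algebra.algebraMap_eq_smul_one] at h

lemma mulVec_cancel_inv_left {N : ℕ} {M : Matrix (Fin N) (Fin N) ℂ} (hu : IsUnit M)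
    (u : Fin N → ℂ) : M⁻¹.mulVec (M.mulVec u) = u := by
  rw [Matrix.mulVec_mulVec, Matrix.nonsing_inv_mul M ((Matrix.isUnit_iff_isUnit_det M).mp hu),
    Matrix.one_mulVec]

lemma mulVec_cancel_left_inv {N : ℕ} {M : Matrix (Fin N) (Fin N) ℂ} (hu : IsUnit M)
    (u : Fin N → ℂ) : M.mulVec (M⁻¹.mulVec u) = u := by
  rw [Matrix.mulVec_mulVec, Matrix.mul_nonsing_inv M ((Matrix.isUnit_iff_isUnit_det M).mp hu),
    Matrix.one_mulVec]

lemma smul_one_sub_mulVec {N : ℕ} (z : ℂ) (M : Matrix (Fin N) (Fin N) ℂ) (u : Fin N → ℂ) :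
    (z • (1 : Matrix (Fin N) (Fin N) ℂ) - M).mulVec u = z • u - M.mulVec u := by
  rw [Matrix.sub_mulVec, Matrix.smul_mulVec, Matrix.one_mulVec]

lemma sum_mulVec_OLD {α : Type*} (s : Finset α) {N N' : ℕ} (M : α → Matrix (Fin N) (Fin N') ℂ)
    (v : Fin N' → ℂ) : (∑ i ∈ s, M i).mulVec v = ∑ i ∈ s, (M i).mulVec v := by
  induction s using Finset.cons_induction with
  | empty => simp [Matrix.zero_mulVec]
  | cons a s ha ih => simp [Matrix.add_mulVec, ih]

lemma proj_range {V : Matrix (Fin n) (Fin nh) ℂ} (hV : Vᴴ * V = 1)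
    {x : Fin n → ℂ} (hx : x ∈ Set.range V.mulVec) :
    V.mulVec (Vᴴ.mulVec x) = x := by
  obtain ⟨y, rfl⟩ := hx
  rw [Matrix.mulVec_mulVec, Matrix.mulVec_mulVec, Matrix.mul_assoc, hV, Matrix.mul_one]

lemma krylov_pow {A : Matrix (Fin n) (Fin n) ℂ} {b : Fin n → ℂ}
    {V : Matrix (Fin n) (Fin nh) ℂ} (hV : Vᴴ * V = 1)
    {Ah : Matrix (Fin nh) (Fin nh) ℂ} (hAh : Ah = Vᴴ * A * V)
    {κ₀ : ℕ} (hVpow : ∀ j < κ₀, (A ^ j).mulVec b ∈ Set.range V.mulVec) :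
    ∀ j < κ₀, Vᴴ.mulVec ((A ^ j).mulVec b) = (Ah ^ j).mulVec (Vᴴ.mulVec b) := by
  intro j
  induction j with
  | zero => intro _; simp [Matrix.one_mulVec]
  | succ j ih =>
      intro hj
      have hj' : j < κ₀ := Nat.lt_of_succ_lt hj
      have hproj := proj_range hV (hVpow j hj')
      simp only [pow_succ', ← Matrix.mulVec_mulVec]
      rw [← ih hj', hAh]
      simp only [← Matrix.mulVec_mulVec]
      rw [hproj]

lemma krylov_res {A : Matrix (Fin n) (Fin n) ℂ} {b : Fin n → ℂ}
    {V : Matrix (Fin n) (Fin nh) ℂ} (hV : Vᴴ * V = 1)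
    {Ah : Matrix (Fin nh) (Fin nh) ℂ} (hAh : Ah = Vᴴ * A * V)
    {z : ℂ} (hzA : IsUnit (z • (1 : Matrix (Fin n) (Fin n) ℂ) - A))
    (hzAh : IsUnit (z • (1 : Matrix (Fin nh) (Fin nh) ℂ) - Ah))
    {κk : ℕ}
    (hVres : ∀ j, 1 ≤ j → j ≤ κk →
      (((z • (1 : Matrix (Fin n) (Fin n) ℂ) - A)⁻¹) ^ j).mulVec b ∈ Set.range V.mulVec) :
    ∀ j ≤ κk, Vᴴ.mulVec ((((z • (1 : Matrix (Fin n) (Fin n) ℂ) - A)⁻¹) ^ j).mulVec b)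
      = (((z • (1 : Matrix (Fin nh) (Fin nh) ℂ) - Ah)⁻¹) ^ j).mulVec (Vᴴ.mulVec b) := by
  set S : Matrix (Fin n) (Fin n) ℂ := z • 1 - A with hS
  set Sh : Matrix (Fin nh) (Fin nh) ℂ := z • 1 - Ah with hSh
  intro j
  induction j with
  | zero => intro _; simp [Matrix.one_mulVec]
  | succ j ih =>
      intro hj
      have hj' : j ≤ κk := Nat.le_of_succ_le hj
      have hproj := proj_range hV (hVres (j+1) (Nat.succ_le_succ (Nat.zero_le j)) hj)
      set y : Fin n → ℂ := ((S⁻¹ : Matrix (Fin n) (Fin n) ℂ) ^ (j+1)).mulVec b with hy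
      have key : Sh.mulVec (Vᴴ.mulVec y) = Vᴴ.mulVec ((S⁻¹ ^ j).mulVec b) := by
        have h2 : Ah.mulVec (Vᴴ.mulVec y) = Vᴴ.mulVec (A.mulVec y) := by
          rw [hAh]
          simp only [← Matrix.mulVec_mulVec]
          rw [hproj]
        have h3 : S.mulVec y = (S⁻¹ ^ j).mulVec b := by
          rw [hy, show ((S⁻¹ : Matrix (Fin n) (Fin n) ℂ) ^ (j+1)).mulVec b
              = S⁻¹.mulVec ((S⁻¹ ^ j).mulVec b) by
            simp only [pow_succ', ← Matrix.mulVec_mulVec]]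
          exact mulVec_cancel_left_inv hzA _
        rw [hSh, smul_one_sub_mulVec, h2, ← Matrix.mulVec_smul, ← Matrix.mulVec_sub,
          ← smul_one_sub_mulVec z A y, ← hS, h3]
      have : Vᴴ.mulVec y = Sh⁻¹.mulVec (Vᴴ.mulVec ((S⁻¹ ^ j).mulVec b)) := by
        rw [← key, mulVec_cancel_inv_left hzAh]
      rw [hy] at this
      rw [this, ih hj']
      simp only [pow_succ', ← Matrix.mulVec_mulVec]

end helpers

section scalar
variable {m : ℕ} (κ : Fin m → ℕ) (κ₀ : ℕ) (lam : Fin m → ℂ) (g : Fin m → ℕ → ℂ) (g₀ : ℕ → ℂ)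

noncomputable def Ffun : ℂ → ℂ := fun w =>
  (∑ k : Fin m, ∑ i ∈ Finset.Icc 1 (κ k), g k i / (lam k - w) ^ i)
    + ∑ i ∈ Finset.range κ₀, g₀ i * w ^ i

noncomputable def Dfun (j : ℕ) : ℂ → ℂ := fun w =>
  (∑ k : Fin m, ∑ i ∈ Finset.Icc 1 (κ k),
      g k i * (i.ascFactorial j : ℂ) / (lam k - w) ^ (i + j))
    + ∑ i ∈ Finset.range κ₀, g₀ i * (i.descFactorial j : ℂ) * w ^ (i - j)

lemma hasDerivAt_Dfun (j : ℕ) (w : ℂ) (hw : ∀ k, w ≠ lam k) :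
    HasDerivAt (Dfun κ κ₀ lam g g₀ j) (Dfun κ κ₀ lam g g₀ (j+1) w) w := by
  apply HasDerivAt.add
  · apply HasDerivAt.fun_sum
    intro k _
    apply HasDerivAt.fun_sum
    intro i hi
    have h0 : lam k - w ≠ 0 := sub_ne_zero_of_ne (fun h => hw k h.symm)
    have hi1 : 1 ≤ i := (Finset.mem_Icc.mp hi).1
    have hpow : HasDerivAt (fun w : ℂ => (lam k - w) ^ (i + j))
        ((i + j : ℕ) * (lam k - w) ^ (i + j - 1) * (-1)) w :=
      (((hasDerivAt_id w).const_sub (lam k)).pow (i+j))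
    have hdiv := (hasDerivAt_const w (g k i * (i.ascFactorial j : ℂ))).div hpow
      (pow_ne_zero _ h0)
    convert hdiv using 1
    case e'_4 => rfl
    case e'_8 => rfl
    rw [Nat.ascFactorial_succ]
    have hq : i + j - 1 + (i + j + 1) = (i + j) * 2 := by omega
    field_simp
    rw [← pow_mul, ← hq, pow_add]
    push_cast
    ring
  · apply HasDerivAt.fun_sum
    intro i _
    have := (hasDerivAt_pow (i - j) w).const_mul (g₀ i * (i.descFactorial j : ℂ))
    convert this using 1
    case e'_4 => rfl
    rw [Nat.descFactorial_succ, Nat.cast_mul, Nat.sub_sub]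
    ring

lemma iteratedDeriv_Ffun (j : ℕ) : ∀ w : ℂ, (∀ k, w ≠ lam k) →
    iteratedDeriv j (Ffun κ κ₀ lam g g₀) w = Dfun κ κ₀ lam g g₀ j w := by
  induction j with
  | zero =>
      intro w hw
      simp [Ffun, Dfun]
  | succ j ih =>
      intro w hw
      rw [iteratedDeriv_succ]
      have hUopen : IsOpen (⋂ k, {w' : ℂ | w' ≠ lam k}) :=
        isOpen_iInter_of_finite fun k => isOpen_ne
      have hwU : w ∈ ⋂ k, {w' : ℂ | w' ≠ lam k} := Set.mem_iInter.mpr hw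
      have hev : iteratedDeriv j (Ffun κ κ₀ lam g g₀) =ᶠ[nhds w] Dfun κ κ₀ lam g g₀ j := by
        filter_upwards [hUopen.mem_nhds hwU] with w' hw'
        exact ih w' (Set.mem_iInter.mp hw')
      rw [hev.deriv_eq]
      exact (hasDerivAt_Dfun κ κ₀ lam g g₀ j w hw).deriv

end scalar

section nilp
variable {nh : ℕ} (Ah : Matrix (Fin nh) (Fin nh) ℂ) (μ : ℂ)

local notation "Nm" => Ah - μ • (1 : Matrix (Fin nh) (Fin nh) ℂ)

lemma mulVec_sum_vec {N N' : ℕ} (M : Matrix (Fin N) (Fin N') ℂ) {α : Type*} (s : Finset α)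
    (f : α → (Fin N' → ℂ)) : M.mulVec (∑ i ∈ s, f i) = ∑ i ∈ s, M.mulVec (f i) :=
  map_sum M.mulVecLin f s

lemma nilp_vanish {w : ℕ} {x : Fin nh → ℂ} (hx : ((Nm) ^ w).mulVec x = 0)
    {s : ℕ} (hs : w ≤ s) : ((Nm) ^ s).mulVec x = 0 := by
  obtain ⟨d, rfl⟩ := Nat.exists_eq_add_of_le hs
  rw [show w + d = d + w by omega, pow_add, ← Matrix.mulVec_mulVec, hx, Matrix.mulVec_zero]

lemma smul_one_sub_mulVec' {N : ℕ} (z : ℂ) (M : Matrix (Fin N) (Fin N) ℂ) (u : Fin N → ℂ) :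
    (z • (1 : Matrix (Fin N) (Fin N) ℂ) - M).mulVec u = z • u - M.mulVec u := by
  rw [Matrix.sub_mulVec, Matrix.smul_mulVec, Matrix.one_mulVec]

lemma resolvent_apply {z : ℂ} (hz : IsUnit (z • (1 : Matrix (Fin nh) (Fin nh) ℂ) - Ah))
    (hzμ : z - μ ≠ 0) {s : ℕ} {y : Fin nh → ℂ} (hy : ((Nm) ^ s).mulVec y = 0) :
    ((z • (1 : Matrix (Fin nh) (Fin nh) ℂ) - Ah)⁻¹).mulVec y
      = ∑ l ∈ Finset.range s, ((z - μ) ^ (l + 1))⁻¹ • ((Nm) ^ l).mulVec y := by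
  have hdet := (Matrix.isUnit_iff_isUnit_det _).mp hz
  have hsplit : z • (1 : Matrix (Fin nh) (Fin nh) ℂ) - Ah
      = (z - μ) • (1 : Matrix (Fin nh) (Fin nh) ℂ) - Nm := by
    rw [sub_smul]; abel
  have hfact : (z • (1 : Matrix (Fin nh) (Fin nh) ℂ) - Ah).mulVec
      (∑ l ∈ Finset.range s, ((z - μ) ^ (l + 1))⁻¹ • ((Nm) ^ l).mulVec y) = y := by
    rw [mulVec_sum_vec]
    have hterm : ∀ l,
        (z • (1 : Matrix (Fin nh) (Fin nh) ℂ) - Ah).mulVec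
          (((z - μ) ^ (l + 1))⁻¹ • ((Nm) ^ l).mulVec y)
        = ((z - μ) ^ l)⁻¹ • ((Nm) ^ l).mulVec y
          - ((z - μ) ^ (l + 1))⁻¹ • ((Nm) ^ (l + 1)).mulVec y := by
      intro l
      rw [Matrix.mulVec_smul, hsplit, smul_one_sub_mulVec']
      rw [Matrix.mulVec_mulVec, ← pow_succ']
      rw [smul_sub, smul_smul]
      congr 2
      rw [pow_succ]
      field_simp
    simp only [hterm]
    rw [Finset.sum_range_sub']
    simp [hy, Matrix.one_mulVec]
  conv_lhs => rw [← hfact]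
  rw [Matrix.mulVec_mulVec, Matrix.nonsing_inv_mul _ hdet, Matrix.one_mulVec]

end nilp

lemma ascFactorial_pascal (i r : ℕ) :
    (i+1).ascFactorial (r+1) = i.ascFactorial (r+1) + (r+1) * (i+1).ascFactorial r := by
  have h := Nat.succ_ascFactorial i r
  rw [Nat.ascFactorial_succ, Nat.ascFactorial_succ, ← h]
  ring

lemma coeff_step (y : ℂ) (hy : y ≠ 0) (i r : ℕ) :
    (((i+1).ascFactorial (r+1) : ℂ) / ((r+1).factorial : ℂ) * (y ^ (i+1+(r+1)))⁻¹) * y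
      - ((i+1).ascFactorial r : ℂ) / (r.factorial : ℂ) * (y ^ (i+1+r))⁻¹
    = ((i.ascFactorial (r+1) : ℂ)) / ((r+1).factorial : ℂ) * (y ^ (i+(r+1)))⁻¹ := by
  have h1 : i + 1 + (r + 1) = (i + (r+1)) + 1 := by omega
  have h2 : i + 1 + r = i + (r + 1) := by omega
  have hfr : (r.factorial : ℂ) ≠ 0 := Nat.cast_ne_zero.mpr (Nat.factorial_ne_zero r)
  have hp : y ^ (i + (r+1)) ≠ 0 := pow_ne_zero _ hy
  have hR : (((r+1).factorial : ℕ) : ℂ) = ((r:ℂ)+1) * (r.factorial : ℂ) := by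
    rw [Nat.factorial_succ]; push_cast; ring
  have hr1 : ((r:ℂ)+1) ≠ 0 := by
    have := Nat.cast_add_one_ne_zero (R := ℂ) r
    simpa using this
  rw [h1, h2, ascFactorial_pascal i r, pow_succ, hR]
  push_cast
  field_simp
  ring

lemma coeff_zero (y : ℂ) (hy : y ≠ 0) (i : ℕ) :
    ((((i+1).ascFactorial 0 : ℂ)) / ((0).factorial : ℂ) * (y ^ (i+1+0))⁻¹) * y
      = ((i.ascFactorial 0 : ℂ)) / ((0).factorial : ℂ) * (y ^ (i+0))⁻¹ := by
  rw [Nat.ascFactorial_zero, Nat.ascFactorial_zero]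
  simp only [Nat.factorial_zero, Nat.cast_one, Nat.add_zero, Nat.cast_ofNat]
  rw [pow_succ, mul_inv]
  field_simp

section respow
variable {nh : ℕ} {Ah : Matrix (Fin nh) (Fin nh) ℂ} {μ : ℂ}

local notation "Nm" => Ah - μ • (1 : Matrix (Fin nh) (Fin nh) ℂ)

lemma resolvent_pow_apply {z : ℂ} (hz : IsUnit (z • (1 : Matrix (Fin nh) (Fin nh) ℂ) - Ah))
    (hzμ : z - μ ≠ 0) {w : ℕ} (hw : 0 < w) {x : Fin nh → ℂ} (hx : ((Nm) ^ w).mulVec x = 0)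
    (i : ℕ) :
    (((z • (1 : Matrix (Fin nh) (Fin nh) ℂ) - Ah)⁻¹) ^ i).mulVec x
      = ∑ j ∈ Finset.range w,
          ((i.ascFactorial j : ℂ) / (j.factorial : ℂ) * ((z - μ) ^ (i + j))⁻¹)
            • ((Nm) ^ j).mulVec x := by
  have hdet := (Matrix.isUnit_iff_isUnit_det _).mp hz
  set u : ℕ → (Fin nh → ℂ) := fun j => ((Nm) ^ j).mulVec x with hu
  have hushift : ∀ j, (Nm).mulVec (u j) = u (j + 1) := by
    intro j; rw [hu]
    simp only [Matrix.mulVec_mulVec, ← pow_succ']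
  have huw : ∀ j, w ≤ j → u j = 0 := fun j hj => nilp_vanish Ah μ hx hj
  induction i with
  | zero =>
      rw [pow_zero, Matrix.one_mulVec]
      rw [Finset.sum_eq_single_of_mem 0 (Finset.mem_range.mpr hw)]
      · simp
      · intro j _ hj
        obtain ⟨r, rfl⟩ := Nat.exists_eq_succ_of_ne_zero hj
        rw [Nat.zero_ascFactorial]
        simp
  | succ i ih =>
      have hsplit : z • (1 : Matrix (Fin nh) (Fin nh) ℂ) - Ah
          = (z - μ) • (1 : Matrix (Fin nh) (Fin nh) ℂ) - Nm := by
        rw [sub_smul]; abel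
      have key : (z • (1 : Matrix (Fin nh) (Fin nh) ℂ) - Ah).mulVec
          (∑ j ∈ Finset.range w,
            (((i+1).ascFactorial j : ℂ) / (j.factorial : ℂ) * ((z - μ) ^ (i+1+j))⁻¹) • u j)
          = ∑ j ∈ Finset.range w,
            ((i.ascFactorial j : ℂ) / (j.factorial : ℂ) * ((z - μ) ^ (i+j))⁻¹) • u j := by
        rw [mulVec_sum_vec]
        have hterm : ∀ j,
            (z • (1 : Matrix (Fin nh) (Fin nh) ℂ) - Ah).mulVec
              ((((i+1).ascFactorial j : ℂ) / (j.factorial : ℂ) * ((z - μ) ^ (i+1+j))⁻¹) • u j)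
            = ((((i+1).ascFactorial j : ℂ) / (j.factorial : ℂ) * ((z - μ) ^ (i+1+j))⁻¹)
                  * (z - μ)) • u j
              - (((i+1).ascFactorial j : ℂ) / (j.factorial : ℂ) * ((z - μ) ^ (i+1+j))⁻¹)
                  • u (j+1) := by
          intro j
          rw [Matrix.mulVec_smul, hsplit, smul_one_sub_mulVec', hushift, smul_sub, smul_smul,
            mul_comm]
        simp only [hterm]
        rw [Finset.sum_sub_distrib]
        obtain ⟨v, rfl⟩ := Nat.exists_eq_succ_of_ne_zero (Nat.pos_iff_ne_zero.mp hw)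
        have hshift : ∑ j ∈ Finset.range (v+1),
              ((((i+1).ascFactorial j : ℂ) / (j.factorial : ℂ) * ((z - μ) ^ (i+1+j))⁻¹))
                • u (j+1)
            = ∑ j ∈ Finset.range (v+1),
              (if j = 0 then 0 else
                (((i+1).ascFactorial (j-1) : ℂ) / ((j-1).factorial : ℂ)
                  * ((z - μ) ^ (i+1+(j-1)))⁻¹)) • u j := by
          rw [Finset.sum_range_succ, Finset.sum_range_succ' _ v]
          rw [huw (v+1) le_rfl, smul_zero, add_zero, if_pos rfl, zero_smul, add_zero]
          apply Finset.sum_congr rfl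
          intro j _
          rw [if_neg (Nat.succ_ne_zero j)]
          simp only [Nat.add_sub_cancel]
        rw [hshift, ← Finset.sum_sub_distrib]
        apply Finset.sum_congr rfl
        intro j _
        rw [← sub_smul]
        congr 1
        rcases j with _ | r
        · rw [if_pos rfl, sub_zero]
          exact coeff_zero (z - μ) hzμ i
        · rw [if_neg (Nat.succ_ne_zero r)]
          simp only [Nat.add_sub_cancel]
          exact coeff_step (z - μ) hzμ i r
      have hI : (((z • (1 : Matrix (Fin nh) (Fin nh) ℂ) - Ah)⁻¹) ^ (i+1)).mulVec x
          = ((z • (1 : Matrix (Fin nh) (Fin nh) ℂ) - Ah)⁻¹).mulVec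
            ((((z • (1 : Matrix (Fin nh) (Fin nh) ℂ) - Ah)⁻¹) ^ i).mulVec x) := by
        simp only [pow_succ', ← Matrix.mulVec_mulVec]
      rw [hI, ih, ← key, Matrix.mulVec_mulVec, Matrix.nonsing_inv_mul _ hdet, Matrix.one_mulVec]

end respow

section powexp
variable {nh : ℕ} {Ah : Matrix (Fin nh) (Fin nh) ℂ} {μ : ℂ}

local notation "Nm" => Ah - μ • (1 : Matrix (Fin nh) (Fin nh) ℂ)

lemma matpow_apply {w : ℕ} (hw : 0 < w) {x : Fin nh → ℂ}
    (huw : ∀ j, w ≤ j → ((Nm) ^ j).mulVec x = 0) (i : ℕ) :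
    (Ah ^ i).mulVec x
      = ∑ j ∈ Finset.range w,
          ((i.descFactorial j : ℂ) / (j.factorial : ℂ) * μ ^ (i - j)) • ((Nm) ^ j).mulVec x := by
  have hAhsplit : Ah = Nm + μ • (1 : Matrix (Fin nh) (Fin nh) ℂ) := by abel
  have hcomm : Commute (Nm) (μ • (1 : Matrix (Fin nh) (Fin nh) ℂ)) :=
    ((Commute.one_right (Nm)).smul_right μ)
  have hpow : Ah ^ i = ∑ j ∈ Finset.range (i+1),
      (μ ^ (i - j) * (i.choose j : ℂ)) • (Nm) ^ j := by
    conv_lhs => rw [hAhsplit]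
    rw [hcomm.add_pow]
    apply Finset.sum_congr rfl
    intro j _
    rw [_root_.smul_pow, one_pow, mul_smul_comm, smul_mul_assoc, Matrix.mul_one,
      ← (Nat.cast_commute (i.choose j) ((Nm) ^ j)).eq, ← nsmul_eq_mul,
      ← Nat.cast_smul_eq_nsmul ℂ, smul_smul]
  rw [hpow, sum_mulVec_OLD]
  simp only [Matrix.smul_mulVec]
  set G : ℕ → (Fin nh → ℂ) := fun j => (μ ^ (i - j) * (i.choose j : ℂ)) • ((Nm) ^ j).mulVec x
    with hG
  have hbig1 : ∑ j ∈ Finset.range (i+1), G j = ∑ j ∈ Finset.range (max (i+1) w), G j := by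
    apply Finset.sum_subset (Finset.range_subset_range.mpr (le_max_left _ _))
    intro j hj hnj
    rw [Finset.mem_range] at hj hnj
    have : i < j := by omega
    rw [hG]
    simp [Nat.choose_eq_zero_of_lt this]
  have hbig2 : ∑ j ∈ Finset.range w, G j = ∑ j ∈ Finset.range (max (i+1) w), G j := by
    apply Finset.sum_subset (Finset.range_subset_range.mpr (le_max_right _ _))
    intro j hj hnj
    rw [Finset.mem_range] at hj hnj
    rw [hG]
    simp [huw j (by omega)]
  rw [hbig1, ← hbig2, hG]
  apply Finset.sum_congr rfl
  intro j _
  congr 1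
  have hfj : (j.factorial : ℂ) ≠ 0 := Nat.cast_ne_zero.mpr (Nat.factorial_ne_zero j)
  rw [Nat.descFactorial_eq_factorial_mul_choose]
  push_cast
  field_simp

end powexp

lemma matrix_exp_add_of_commute {N : ℕ} (A B : Matrix (Fin N) (Fin N) ℂ) (h : Commute A B) :
    NormedSpace.exp (A + B) = NormedSpace.exp A * NormedSpace.exp B :=
  Matrix.exp_add_of_commute A B h

section expapply
variable {nh : ℕ} {Ah : Matrix (Fin nh) (Fin nh) ℂ} {μ : ℂ}

local notation "Nm" => Ah - μ • (1 : Matrix (Fin nh) (Fin nh) ℂ)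

lemma matexp_apply (c : ℂ) {w : ℕ} (hw : 0 < w) {x : Fin nh → ℂ}
    (huw : ∀ j, w ≤ j → ((Nm) ^ j).mulVec x = 0) :
    (NormedSpace.exp (c • Ah)).mulVec x
      = ∑ j ∈ Finset.range w,
          (c ^ j * Complex.exp (c * μ) / (j.factorial : ℂ)) • ((Nm) ^ j).mulVec x := by
  have hsplit : c • Ah = (c * μ) • (1 : Matrix (Fin nh) (Fin nh) ℂ) + c • (Nm) := by
    rw [smul_sub, smul_smul]; abel
  have hcomm : Commute ((c * μ) • (1 : Matrix (Fin nh) (Fin nh) ℂ)) (c • (Nm)) :=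
    (Commute.one_left (c • (Nm))).smul_left (c * μ)
  rw [hsplit, matrix_exp_add_of_commute _ _ hcomm]
  have h1 : NormedSpace.exp ((c * μ) • (1 : Matrix (Fin nh) (Fin nh) ℂ))
      = Complex.exp (c * μ) • (1 : Matrix (Fin nh) (Fin nh) ℂ) := by
    letI : SeminormedRing (Matrix (Fin nh) (Fin nh) ℂ) := Matrix.linftyOpSemiNormedRing
    letI : NormedRing (Matrix (Fin nh) (Fin nh) ℂ) := Matrix.linftyOpNormedRing
    letI : NormedAlgebra ℂ (Matrix (Fin nh) (Fin nh) ℂ) := Matrix.linftyOpNormedAlgebra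
    have h := (NormedSpace.algebraMap_exp_comm (𝕂 := ℂ)
      (𝔸 := Matrix (Fin nh) (Fin nh) ℂ) (c * μ)).symm
    rw [Algebra.algebraMap_eq_smul_one, Algebra.algebraMap_eq_smul_one] at h
    rw [← Complex.exp_eq_exp_ℂ] at h
    exact h
  rw [h1, smul_mul_assoc, Matrix.one_mul, Matrix.smul_mulVec]
  -- now expand exp (c • Nm) applied to x
  have hsum : Summable (fun n : ℕ => ((n.factorial : ℂ))⁻¹ • (c • (Nm)) ^ n) := by
    letI : SeminormedRing (Matrix (Fin nh) (Fin nh) ℂ) := Matrix.linftyOpSemiNormedRing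
    letI : NormedRing (Matrix (Fin nh) (Fin nh) ℂ) := Matrix.linftyOpNormedRing
    letI : NormedAlgebra ℂ (Matrix (Fin nh) (Fin nh) ℂ) := Matrix.linftyOpNormedAlgebra
    exact NormedSpace.expSeries_summable' (𝕂 := ℂ) (c • (Nm))
  let L : Matrix (Fin nh) (Fin nh) ℂ →ₗ[ℂ] (Fin nh → ℂ) :=
    { toFun := fun M => M.mulVec x
      map_add' := fun M M' => Matrix.add_mulVec M M' x
      map_smul' := fun a M => Matrix.smul_mulVec a M x }
  have hL : Continuous L := L.continuous_of_finiteDimensional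
  have hexp : (NormedSpace.exp (c • (Nm))).mulVec x
      = ∑' n : ℕ, ((n.factorial : ℂ))⁻¹ • ((c • (Nm)) ^ n).mulVec x := by
    have := (hsum.hasSum.map L.toAddMonoidHom hL).tsum_eq
    rw [NormedSpace.exp_eq_tsum ℂ]
    calc (∑' n : ℕ, ((n.factorial : ℂ))⁻¹ • (c • (Nm)) ^ n).mulVec x
        = L (∑' n : ℕ, ((n.factorial : ℂ))⁻¹ • (c • (Nm)) ^ n) := rfl
      _ = ∑' n : ℕ, L (((n.factorial : ℂ))⁻¹ • (c • (Nm)) ^ n) := this.symm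
      _ = ∑' n : ℕ, ((n.factorial : ℂ))⁻¹ • ((c • (Nm)) ^ n).mulVec x := by
          apply tsum_congr; intro n
          simp [L]
  rw [hexp]
  have hvanish : ∀ n ∉ Finset.range w, ((n.factorial : ℂ))⁻¹ • ((c • (Nm)) ^ n).mulVec x = 0 := by
    intro n hn
    rw [Finset.mem_range, not_lt] at hn
    rw [_root_.smul_pow, Matrix.smul_mulVec, huw n hn]
    simp
  rw [tsum_eq_sum hvanish, Finset.smul_sum]
  apply Finset.sum_congr rfl
  intro j _
  rw [_root_.smul_pow, Matrix.smul_mulVec, smul_smul, smul_smul]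
  congr 1
  field_simp

end expapply

section spec
variable {nh : ℕ} (M : Matrix (Fin nh) (Fin nh) ℂ)

lemma charpoly_eval_eq_det (μ : ℂ) :
    (Matrix.charpoly M).eval μ = (μ • (1 : Matrix (Fin nh) (Fin nh) ℂ) - M).det := by
  rw [Matrix.charpoly]
  have h1 : (Polynomial.evalRingHom μ) (M.charmatrix.det)
      = ((M.charmatrix).map (Polynomial.evalRingHom μ)).det :=
    RingHom.map_det _ _
  have h2 : (M.charmatrix).map (Polynomial.evalRingHom μ)
      = μ • (1 : Matrix (Fin nh) (Fin nh) ℂ) - M := by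
    ext i j
    by_cases hij : i = j
    · subst hij
      simp [Matrix.charmatrix_apply_eq, Matrix.map_apply, Matrix.sub_apply, Matrix.smul_apply,
        Matrix.one_apply_eq]
    · simp [Matrix.charmatrix_apply_ne _ _ _ hij, Matrix.map_apply, Matrix.sub_apply,
        Matrix.smul_apply, Matrix.one_apply_ne hij]
  calc (Matrix.charpoly M).eval μ = (Polynomial.evalRingHom μ) (M.charmatrix.det) := rfl
    _ = ((M.charmatrix).map (Polynomial.evalRingHom μ)).det := h1
    _ = (μ • (1 : Matrix (Fin nh) (Fin nh) ℂ) - M).det := by rw [h2]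
  
lemma root_mem_spectrum {μ : ℂ} (h : (Matrix.charpoly M).IsRoot μ) : μ ∈ spectrum ℂ M := by
  rw [spectrum.mem_iff]
  intro hunit
  rw [Algebra.algebraMap_eq_smul_one] at hunit
  have hdet := (Matrix.isUnit_iff_isUnit_det _).mp hunit
  rw [← charpoly_eval_eq_det] at hdet
  rw [Polynomial.IsRoot.def] at h
  rw [h] at hdet
  exact (by simpa using hdet : False)

lemma charpoly_factor :
    Matrix.charpoly M = ∏ μ ∈ (Matrix.charpoly M).roots.toFinset,
      (X - C μ) ^ ((Matrix.charpoly M).rootMultiplicity μ) := by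
  have hmonic := Matrix.charpoly_monic M
  have hne : Matrix.charpoly M ≠ 0 := hmonic.ne_zero
  have hsplits : (Matrix.charpoly M).Splits := IsAlgClosed.splits _
  conv_lhs => rw [hsplits.eq_prod_roots_of_monic hmonic]
  rw [Finset.prod_multiset_map_count]
  apply Finset.prod_congr rfl
  intro μ _
  rw [Polynomial.count_roots]

lemma aeval_sub_pow (μ : ℂ) (w : ℕ) :
    (Polynomial.aeval M) ((X - C μ) ^ w) = (M - μ • (1 : Matrix (Fin nh) (Fin nh) ℂ)) ^ w := by
  rw [map_pow, map_sub, Polynomial.aeval_X, Polynomial.aeval_C,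
    Algebra.algebraMap_eq_smul_one]

lemma primary_decomposition (y : Fin nh → ℂ) :
    ∃ f : ℂ → (Fin nh → ℂ),
      y = ∑ μ ∈ (Matrix.charpoly M).roots.toFinset, f μ ∧
      ∀ μ ∈ (Matrix.charpoly M).roots.toFinset,
        ((M - μ • (1 : Matrix (Fin nh) (Fin nh) ℂ))
          ^ ((Matrix.charpoly M).rootMultiplicity μ)).mulVec (f μ) = 0 := by
  rcases (Matrix.charpoly M).roots.toFinset.eq_empty_or_nonempty with hS | hS
  · -- no roots : charpoly = 1, so 1 = 0 as matrices and y = 0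
    refine ⟨fun _ => 0, ?_, ?_⟩
    · have hroots : (Matrix.charpoly M).roots = 0 := by
        rwa [Multiset.toFinset_eq_empty] at hS
      have hp1 : Matrix.charpoly M = 1 := by
        conv_lhs => rw [(IsAlgClosed.splits _).eq_prod_roots_of_monic
          (Matrix.charpoly_monic M)]
        rw [hroots]
        simp
      have hCH := Matrix.aeval_self_charpoly M
      rw [hp1, _root_.map_one] at hCH
      have h1 : y = (1 : Matrix (Fin nh) (Fin nh) ℂ).mulVec y := (Matrix.one_mulVec y).symm
      rw [h1, hCH, Matrix.zero_mulVec, hS]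
      simp
    · intro μ hμ
      simp [Matrix.mulVec_zero]
  · -- Bezout
    have hcop : Pairwise (Function.onFun IsCoprime
        fun μ : (Matrix.charpoly M).roots.toFinset =>
          (X - C (μ : ℂ)) ^ ((Matrix.charpoly M).rootMultiplicity (μ : ℂ))) := by
      have hbase : Pairwise (Function.onFun IsCoprime
          fun μ : (Matrix.charpoly M).roots.toFinset => (X - C (μ : ℂ))) :=
        Polynomial.pairwise_coprime_X_sub_C Subtype.val_injective
      exact hbase.mono fun i j hij => hij.pow
    obtain ⟨u, hu⟩ := (exists_sum_eq_one_iff_pairwise_coprime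
      (s := fun μ : ℂ => (X - C μ) ^ ((Matrix.charpoly M).rootMultiplicity μ)) hS).mpr hcop
    refine ⟨fun μ => ((Polynomial.aeval M) (u μ * ∏ ν ∈ (Matrix.charpoly M).roots.toFinset \ {μ},
      (X - C ν) ^ ((Matrix.charpoly M).rootMultiplicity ν))).mulVec y, ?_, ?_⟩
    · have h1 : y = ((Polynomial.aeval M) (1 : ℂ[X])).mulVec y := by
        rw [_root_.map_one, Matrix.one_mulVec]
      conv_lhs => rw [h1, ← hu]
      rw [map_sum, sum_mulVec_OLD]
    · intro μ hμ
      rw [Matrix.mulVec_mulVec, ← aeval_sub_pow M μ _, ← _root_.map_mul]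
      have hfac : (X - C μ) ^ ((Matrix.charpoly M).rootMultiplicity μ)
            * (u μ * ∏ ν ∈ (Matrix.charpoly M).roots.toFinset \ {μ},
                (X - C ν) ^ ((Matrix.charpoly M).rootMultiplicity ν))
          = u μ * Matrix.charpoly M := by
        conv_rhs => rw [charpoly_factor M, Finset.prod_eq_mul_prod_sdiff_singleton_of_mem hμ
          (fun ν => (X - C ν) ^ ((Matrix.charpoly M).rootMultiplicity ν))]
        ring
      rw [hfac, _root_.map_mul, Matrix.aeval_self_charpoly, mul_zero, Matrix.zero_mulVec]

end spec
section reduced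
variable {nh m : ℕ}

lemma reduced_apply (Ah : Matrix (Fin nh) (Fin nh) ℂ) (lam : Fin m → ℂ)
    (hlamAh : ∀ k, lam k ∉ spectrum ℂ Ah)
    (κ₀ : ℕ) (κ : Fin m → ℕ) (t : ℝ) (g₀ : ℕ → ℂ) (g : Fin m → ℕ → ℂ)
    (hinterp : ∀ μ ∈ spectrum ℂ Ah,
      ∀ j < (Matrix.charpoly Ah).rootMultiplicity μ,
        iteratedDeriv j
          (fun w => (∑ k : Fin m, ∑ i ∈ Finset.Icc 1 (κ k),
              g k i / (lam k - w) ^ i)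
            + ∑ i ∈ Finset.range κ₀, g₀ i * w ^ i) μ
        = (t : ℂ) ^ j * Complex.exp ((t : ℂ) * μ))
    (y : Fin nh → ℂ) :
    ((∑ k : Fin m, ∑ j ∈ Finset.Icc 1 (κ k),
        g k j • ((lam k • (1 : Matrix (Fin nh) (Fin nh) ℂ) - Ah)⁻¹) ^ j)
      + ∑ j ∈ Finset.range κ₀, g₀ j • Ah ^ j).mulVec y
    = (NormedSpace.exp ((t : ℂ) • Ah)).mulVec y := by
  obtain ⟨f, hdecomp, hann⟩ := primary_decomposition Ah y
  have key : ∀ μ ∈ (Matrix.charpoly Ah).roots.toFinset,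
      ((∑ k : Fin m, ∑ j ∈ Finset.Icc 1 (κ k),
          g k j • ((lam k • (1 : Matrix (Fin nh) (Fin nh) ℂ) - Ah)⁻¹) ^ j)
        + ∑ j ∈ Finset.range κ₀, g₀ j • Ah ^ j).mulVec (f μ)
      = (NormedSpace.exp ((t : ℂ) • Ah)).mulVec (f μ) := by
    intro μ hμ
    have hne : Matrix.charpoly Ah ≠ 0 := (Matrix.charpoly_monic Ah).ne_zero
    have hroot : (Matrix.charpoly Ah).IsRoot μ := by
      have hmem : μ ∈ Ah.charpoly.roots := Multiset.mem_toFinset.mp hμ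
      exact (Polynomial.mem_roots hne).mp hmem
    set w : ℕ := (Matrix.charpoly Ah).rootMultiplicity μ with hwdef
    have hw : 0 < w := (Polynomial.rootMultiplicity_pos hne).mpr hroot
    have hμspec : μ ∈ spectrum ℂ Ah := root_mem_spectrum Ah hroot
    have hx : ((Ah - μ • (1 : Matrix (Fin nh) (Fin nh) ℂ)) ^ w).mulVec (f μ) = 0 := hann μ hμ
    have huw : ∀ j, w ≤ j →
        ((Ah - μ • (1 : Matrix (Fin nh) (Fin nh) ℂ)) ^ j).mulVec (f μ) = 0 :=
      fun j hj => nilp_vanish Ah μ hx hj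
    have hlamne : ∀ k, lam k - μ ≠ 0 := by
      intro k
      refine sub_ne_zero_of_ne fun h => hlamAh k (h ▸ hμspec)
    have hμne : ∀ k, μ ≠ lam k := fun k h => (hlamne k) (by rw [h]; ring)
    -- value of the derivatives
    have hDval : ∀ j < w, Dfun κ κ₀ lam g g₀ j μ
        = (t : ℂ) ^ j * Complex.exp ((t : ℂ) * μ) := by
      intro j hj
      rw [← iteratedDeriv_Ffun κ κ₀ lam g g₀ j μ hμne]
      exact hinterp μ hμspec j hj
    -- expand LHS
    rw [Matrix.add_mulVec, sum_mulVec_OLD]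
    have hres : ∀ k : Fin m, (∑ j ∈ Finset.Icc 1 (κ k),
        g k j • ((lam k • (1 : Matrix (Fin nh) (Fin nh) ℂ) - Ah)⁻¹) ^ j).mulVec (f μ)
        = ∑ j ∈ Finset.range w,
            (∑ i ∈ Finset.Icc 1 (κ k), g k i *
              ((i.ascFactorial j : ℂ) / (j.factorial : ℂ) * ((lam k - μ) ^ (i + j))⁻¹)) •
            ((Ah - μ • (1 : Matrix (Fin nh) (Fin nh) ℂ)) ^ j).mulVec (f μ) := by
      intro k
      rw [sum_mulVec_OLD]
      have hterm : ∀ i ∈ Finset.Icc 1 (κ k),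
          (g k i • ((lam k • (1 : Matrix (Fin nh) (Fin nh) ℂ) - Ah)⁻¹) ^ i).mulVec (f μ)
          = ∑ j ∈ Finset.range w,
            (g k i * ((i.ascFactorial j : ℂ) / (j.factorial : ℂ)
                * ((lam k - μ) ^ (i + j))⁻¹)) •
            ((Ah - μ • (1 : Matrix (Fin nh) (Fin nh) ℂ)) ^ j).mulVec (f μ) := by
        intro i _
        rw [Matrix.smul_mulVec,
          resolvent_pow_apply (isUnit_smul_one_sub (hlamAh k)) (hlamne k) hw hx i,
          Finset.smul_sum]
        apply Finset.sum_congr rfl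
        intro j _
        rw [smul_smul]
      rw [Finset.sum_congr rfl hterm, Finset.sum_comm]
      apply Finset.sum_congr rfl
      intro j _
      rw [Finset.sum_smul]
    have hpowe : (∑ j ∈ Finset.range κ₀, g₀ j • Ah ^ j).mulVec (f μ)
        = ∑ j ∈ Finset.range w,
            (∑ i ∈ Finset.range κ₀, g₀ i *
              ((i.descFactorial j : ℂ) / (j.factorial : ℂ) * μ ^ (i - j))) •
            ((Ah - μ • (1 : Matrix (Fin nh) (Fin nh) ℂ)) ^ j).mulVec (f μ) := by
      rw [sum_mulVec_OLD]
      have hterm : ∀ i ∈ Finset.range κ₀,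
          (g₀ i • Ah ^ i).mulVec (f μ)
          = ∑ j ∈ Finset.range w,
            (g₀ i * ((i.descFactorial j : ℂ) / (j.factorial : ℂ) * μ ^ (i - j))) •
            ((Ah - μ • (1 : Matrix (Fin nh) (Fin nh) ℂ)) ^ j).mulVec (f μ) := by
        intro i _
        rw [Matrix.smul_mulVec, matpow_apply hw huw i, Finset.smul_sum]
        apply Finset.sum_congr rfl
        intro j _
        rw [smul_smul]
      rw [Finset.sum_congr rfl hterm, Finset.sum_comm]
      apply Finset.sum_congr rfl
      intro j _
      rw [Finset.sum_smul]
    rw [Finset.sum_congr rfl (fun k _ => hres k), Finset.sum_comm, hpowe,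
      ← Finset.sum_add_distrib]
    -- expand RHS
    rw [matexp_apply (t : ℂ) hw huw]
    apply Finset.sum_congr rfl
    intro j hj
    rw [← Finset.sum_smul, ← add_smul]
    congr 1
    have hD := hDval j (Finset.mem_range.mp hj)
    rw [Dfun] at hD
    have hfj : (j.factorial : ℂ) ≠ 0 := Nat.cast_ne_zero.mpr (Nat.factorial_ne_zero j)
    rw [eq_div_iff hfj, ← hD]
    rw [add_mul, Finset.sum_mul, Finset.sum_mul]
    congr 1
    · apply Finset.sum_congr rfl
      intro k _
      rw [Finset.sum_mul]
      apply Finset.sum_congr rfl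
      intro i _
      have hp : ((lam k - μ) ^ (i + j)) ≠ 0 := pow_ne_zero _ (hlamne k)
      field_simp
    · apply Finset.sum_congr rfl
      intro i _
      field_simp
  rw [hdecomp, mulVec_sum_vec, mulVec_sum_vec]
  exact Finset.sum_congr rfl key

end reduced

/- STATEMENT 15: if the rational function r_t interpolates exp_t(λ) = e^{λt} at the
   eigenvalues of Â with their algebraic multiplicities, then r_t(A) b = V exp(tÂ) b̂. -/
theorem one_sided_reduced_order_exp_exactness
    {n nh m : ℕ} (A : Matrix (Fin n) (Fin n) ℂ) (b : Fin n → ℂ)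
    (V : Matrix (Fin n) (Fin nh) ℂ) (hV : Vᴴ * V = 1)
    (Ah : Matrix (Fin nh) (Fin nh) ℂ) (hAh : Ah = Vᴴ * A * V)
    (lam : Fin m → ℂ)
    (hlamA : ∀ k, lam k ∉ spectrum ℂ A)
    (hlamAh : ∀ k, lam k ∉ spectrum ℂ Ah)
    (κ₀ : ℕ) (κ : Fin m → ℕ)
    (hVpow : ∀ j < κ₀, (A ^ j).mulVec b ∈ Set.range V.mulVec)
    (hVres : ∀ k : Fin m, ∀ j, 1 ≤ j → j ≤ κ k →
      (((lam k • (1 : Matrix (Fin n) (Fin n) ℂ) - A)⁻¹) ^ j).mulVec b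
        ∈ Set.range V.mulVec)
    (t : ℝ) (g₀ : ℕ → ℂ) (g : Fin m → ℕ → ℂ)
    (hinterp : ∀ μ ∈ spectrum ℂ Ah,
      ∀ j < (Matrix.charpoly Ah).rootMultiplicity μ,
        iteratedDeriv j
          (fun w => (∑ k : Fin m, ∑ i ∈ Finset.Icc 1 (κ k),
              g k i / (lam k - w) ^ i)
            + ∑ i ∈ Finset.range κ₀, g₀ i * w ^ i) μ
        = (t : ℂ) ^ j * Complex.exp ((t : ℂ) * μ)) :
    ((∑ k : Fin m, ∑ j ∈ Finset.Icc 1 (κ k),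
        g k j • ((lam k • (1 : Matrix (Fin n) (Fin n) ℂ) - A)⁻¹) ^ j)
      + ∑ j ∈ Finset.range κ₀, g₀ j • A ^ j).mulVec b
    = (V * NormedSpace.exp ((t : ℂ) • Ah)).mulVec (Vᴴ.mulVec b) := by
  have hterm1 : ∀ k : Fin m, ∀ j ∈ Finset.Icc 1 (κ k),
      (((lam k • (1 : Matrix (Fin n) (Fin n) ℂ) - A)⁻¹) ^ j).mulVec b
      = V.mulVec ((((lam k • (1 : Matrix (Fin nh) (Fin nh) ℂ) - Ah)⁻¹) ^ j).mulVec
          (Vᴴ.mulVec b)) := by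
    intro k j hj
    obtain ⟨hj1, hj2⟩ := Finset.mem_Icc.mp hj
    rw [← krylov_res hV hAh (isUnit_smul_one_sub (hlamA k)) (isUnit_smul_one_sub (hlamAh k))
      (hVres k) j hj2]
    exact (proj_range hV (hVres k j hj1 hj2)).symm
  have hterm2 : ∀ j ∈ Finset.range κ₀,
      (A ^ j).mulVec b = V.mulVec ((Ah ^ j).mulVec (Vᴴ.mulVec b)) := by
    intro j hj
    have hj' := Finset.mem_range.mp hj
    rw [← krylov_pow hV hAh hVpow j hj']
    exact (proj_range hV (hVpow j hj')).symm
  rw [← Matrix.mulVec_mulVec, ← reduced_apply Ah lam hlamAh κ₀ κ t g₀ g hinterp (Vᴴ.mulVec b)]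
  simp only [Matrix.add_mulVec, sum_mulVec_OLD, Matrix.smul_mulVec, Matrix.mulVec_add,
    Matrix.mulVec_smul, mulVec_sum_vec]
  congr 1
  · apply Finset.sum_congr rfl
    intro k _
    apply Finset.sum_congr rfl
    intro j hj
    rw [hterm1 k j hj]
  · apply Finset.sum_congr rfl
    intro j hj
    rw [hterm2 j hj]
end
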